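/- arXiv:1811.01558 — 10 statements merged into one kernel-verified Lean document; each statement's English description precedes it below -/
import Mathlib

section
/- Fix T > 0, an initial point x₀ ∈ ℝ^d, a probability space (Ω, F, P), a measurable space Γ, an i.i.d. sequence (γ_k)_{k≥0} of Γ-valued random variables, and a measurable map h : ℝ^d × Γ × ℝ → ℝ^d. Assume there is a measurable function L : Γ → (0, ∞) such that |h(x, r, η)| ≤ L(r)(1 + |x|) for all x, r, η, and E[L(γ₀)^m] < ∞ for every integer m ≥ 1. For each learning rate η ∈ (0, min(1, T)) define the iterates x_{k+1} = x_k + η·h(x_k, γ_k, η). Then for every integer m ≥ 1 there exists a constant C (depending only on T, m, |x₀| and the moments of L(γ₀), but not on η or k) such that E|x_k|^m ≤ C for all η ∈ (0, min(1, T)) and all 0 ≤ k ≤ ⌊T/η⌋. -/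
open MeasureTheory ProbabilityTheory

lemma aux_pow_succ (n : ℕ) (t : ℝ) (ht : 0 ≤ t) :
    (1 + t) ^ (n + 1) ≤ 1 + (n + 1) * t * (1 + t) ^ n := by
  induction n with
  | zero => simp
  | succ n ih =>
    have h1 : (1:ℝ) ≤ (1 + t) ^ (n+1) := one_le_pow₀ (by linarith)
    have h0 : (0:ℝ) ≤ (1 + t) ^ n := by positivity
    calc (1 + t) ^ (n + 2) = (1 + t) ^ (n + 1) * (1 + t) := by ring
    _ ≤ (1 + (n + 1) * t * (1 + t) ^ n) * (1 + t) := by nlinarith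
    _ = 1 + t + (n + 1) * t * (1 + t) ^ (n+1) := by ring
    _ ≤ 1 + (n + 2) * t * (1 + t) ^ (n+1) := by nlinarith
    _ = 1 + (↑(n+1) + 1) * t * (1 + t) ^ (n+1) := by push_cast; ring

lemma aux_pow_bound (m : ℕ) (t : ℝ) (ht : 0 ≤ t) :
    (1 + t) ^ m ≤ 2 ^ m * (1 + t ^ m) := by
  rcases le_total t 1 with h | h
  · calc (1+t)^m ≤ 2^m := pow_le_pow_left₀ (by linarith) (by linarith) m
    _ ≤ 2^m * (1 + t^m) := by nlinarith [pow_nonneg ht m, pow_pos (by norm_num : (0:ℝ)<2) m]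
  · calc (1+t)^m ≤ (2*t)^m := pow_le_pow_left₀ (by linarith) (by linarith) m
    _ = 2^m * t^m := mul_pow 2 t m
    _ ≤ 2^m * (1 + t^m) := by nlinarith [pow_pos (by norm_num : (0:ℝ)<2) m]

/-- Uniform moment bounds for generalized stochastic gradient iterations:
if `|h(x, r, η)| ≤ L(r)(1 + |x|)` with all moments of `L(γ₀)` finite, then for every `m ≥ 1`
the `m`-th moment of the iterates `x_{k+1} = x_k + η h(x_k, γ_k, η)` is bounded uniformly in
the learning rate `η ∈ (0, min 1 T)` and in `0 ≤ k ≤ ⌊T/η⌋`. -/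
theorem sga_uniform_moment_bound
    {d : ℕ} (T : ℝ) (hT : 0 < T) (x₀ : EuclideanSpace ℝ (Fin d))
    {Ω : Type*} [MeasurableSpace Ω] (P : Measure Ω) [IsProbabilityMeasure P]
    {Γ : Type*} [MeasurableSpace Γ]
    (γ : ℕ → Ω → Γ) (hγmeas : ∀ k, Measurable (γ k))
    (hindep : iIndepFun γ P)
    (hident : ∀ k, IdentDistrib (γ k) (γ 0) P P)
    (h : EuclideanSpace ℝ (Fin d) → Γ → ℝ → EuclideanSpace ℝ (Fin d))
    (hmeas : Measurable fun p : EuclideanSpace ℝ (Fin d) × Γ × ℝ => h p.1 p.2.1 p.2.2)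
    (L : Γ → ℝ) (hLmeas : Measurable L) (hLpos : ∀ r, 0 < L r)
    (hgrowth : ∀ (x : EuclideanSpace ℝ (Fin d)) (r : Γ) (η : ℝ),
      ‖h x r η‖ ≤ L r * (1 + ‖x‖))
    (hLmom : ∀ m : ℕ, 1 ≤ m → Integrable (fun ω => (L (γ 0 ω)) ^ m) P)
    (x : ℝ → ℕ → Ω → EuclideanSpace ℝ (Fin d))
    (hx0 : ∀ η ω, x η 0 ω = x₀)
    (hrec : ∀ η k ω, x η (k + 1) ω = x η k ω + η • h (x η k ω) (γ k ω) η) :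
    ∀ m : ℕ, 1 ≤ m → ∃ C : ℝ,
      ∀ η : ℝ, 0 < η → η < min 1 T →
        ∀ k : ℕ, k ≤ ⌊T / η⌋₊ → ∫ ω, ‖x η k ω‖ ^ m ∂P ≤ C := by
  intro m hm
  obtain ⟨n, rfl⟩ : ∃ n, m = n + 1 := ⟨m - 1, (Nat.succ_pred_eq_of_pos hm).symm⟩
  -- integrable dominating function
  have hdom : Integrable (fun ω => (2:ℝ) ^ (n+1) * (1 + L (γ 0 ω) ^ (n+1))) P :=
    ((integrable_const (1:ℝ)).add (hLmom (n+1) (Nat.le_add_left 1 n))).const_mul _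
  have hBint : Integrable (fun ω => ((n:ℝ)+1) * L (γ 0 ω) * (1 + L (γ 0 ω)) ^ n) P := by
    apply Integrable.mono' (hdom.const_mul ((n:ℝ)+1))
    · exact (((measurable_const.mul (hLmeas.comp (hγmeas 0))).mul
        (((measurable_const.add (hLmeas.comp (hγmeas 0))).pow_const n)))).aestronglyMeasurable
    · refine ae_of_all _ fun ω => ?_
      have hL := (hLpos (γ 0 ω)).le
      have h1 : ((n:ℝ)+1) * L (γ 0 ω) * (1 + L (γ 0 ω)) ^ n ≤ ((n:ℝ)+1) * (1 + L (γ 0 ω)) ^ (n+1) := by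
        have : L (γ 0 ω) * (1 + L (γ 0 ω)) ^ n ≤ (1 + L (γ 0 ω)) * (1 + L (γ 0 ω)) ^ n :=
          mul_le_mul_of_nonneg_right (by linarith) (by positivity)
        calc ((n:ℝ)+1) * L (γ 0 ω) * (1 + L (γ 0 ω)) ^ n
            = ((n:ℝ)+1) * (L (γ 0 ω) * (1 + L (γ 0 ω)) ^ n) := by ring
          _ ≤ ((n:ℝ)+1) * ((1 + L (γ 0 ω)) * (1 + L (γ 0 ω)) ^ n) :=
              mul_le_mul_of_nonneg_left this (by positivity)
          _ = ((n:ℝ)+1) * (1 + L (γ 0 ω)) ^ (n+1) := by ring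
      have h2 : (1 + L (γ 0 ω)) ^ (n+1) ≤ 2 ^ (n+1) * (1 + L (γ 0 ω) ^ (n+1)) :=
        aux_pow_bound (n+1) _ hL
      have hnorm : ‖((n:ℝ)+1) * L (γ 0 ω) * (1 + L (γ 0 ω)) ^ n‖
          = ((n:ℝ)+1) * L (γ 0 ω) * (1 + L (γ 0 ω)) ^ n := by
        rw [Real.norm_eq_abs, abs_of_nonneg]; positivity
      rw [hnorm]
      calc ((n:ℝ)+1) * L (γ 0 ω) * (1 + L (γ 0 ω)) ^ n
          ≤ ((n:ℝ)+1) * (1 + L (γ 0 ω)) ^ (n+1) := h1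
        _ ≤ ((n:ℝ)+1) * (2 ^ (n+1) * (1 + L (γ 0 ω) ^ (n+1))) :=
            mul_le_mul_of_nonneg_left h2 (by positivity)
        _ = ((n:ℝ)+1) * (2 ^ (n+1) * (1 + L (γ 0 ω) ^ (n+1))) := rfl
  set B : ℝ := ∫ ω, ((n:ℝ)+1) * L (γ 0 ω) * (1 + L (γ 0 ω)) ^ n ∂P with hBdef
  have hB0 : 0 ≤ B := integral_nonneg fun ω => by
    have := (hLpos (γ 0 ω)).le; positivity
  refine ⟨(1 + ‖x₀‖) ^ (n+1) * Real.exp (T * B), ?_⟩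
  intro η hη0 hηlt k hk
  have hη1 : η ≤ 1 := le_of_lt (lt_of_lt_of_le hηlt (min_le_left _ _))
  -- the composed random variables
  set f : Γ → ℝ := fun r => (1 + η * L r) ^ (n+1) with hfdef
  have hfmeas : Measurable f := ((measurable_const.add (measurable_const.mul hLmeas)).pow_const _)
  set g : ℕ → Ω → ℝ := fun j ω => f (γ j ω) with hgdef
  have hgmeas : ∀ j, Measurable (g j) := fun j => hfmeas.comp (hγmeas j)
  have hgnonneg : ∀ j ω, 0 ≤ g j ω := fun j ω => by
    have := (hLpos (γ j ω)).le
    simp only [hgdef, hfdef]; positivity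
  have hgid : ∀ j, IdentDistrib (g j) (g 0) P P := fun j => (hident j).comp hfmeas
  have hg0int : Integrable (g 0) P := by
    apply Integrable.mono' hdom
    · exact (hgmeas 0).aestronglyMeasurable
    · refine ae_of_all _ fun ω => ?_
      have hL := (hLpos (γ 0 ω)).le
      have hηL : η * L (γ 0 ω) ≤ L (γ 0 ω) := by nlinarith
      have hnorm : ‖g 0 ω‖ = g 0 ω := by
        rw [Real.norm_eq_abs, abs_of_nonneg (hgnonneg 0 ω)]
      rw [hnorm]
      calc g 0 ω = (1 + η * L (γ 0 ω)) ^ (n+1) := rfl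
        _ ≤ (1 + L (γ 0 ω)) ^ (n+1) :=
            pow_le_pow_left₀ (by positivity) (by linarith) _
        _ ≤ 2 ^ (n+1) * (1 + L (γ 0 ω) ^ (n+1)) := aux_pow_bound (n+1) _ hL
  have hgint : ∀ j, Integrable (g j) P := fun j => (hgid j).integrable_iff.2 hg0int
  have hgindep : iIndepFun g P :=
    hindep.comp (fun _ => f) (fun _ => hfmeas)
  -- product integrals
  have heqfun : ∀ k : ℕ, (fun ω => ∏ j ∈ Finset.range k, g j ω)
      = ∏ j ∈ Finset.range k, g j := by
    intro k; funext ω; exact (Finset.prod_apply ω (Finset.range k) g).symm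
  have hprod : ∀ k : ℕ, Integrable (fun ω => ∏ j ∈ Finset.range k, g j ω) P ∧
      ∫ ω, ∏ j ∈ Finset.range k, g j ω ∂P = (∫ ω, g 0 ω ∂P) ^ k := by
    intro k
    induction k with
    | zero => simpa using integrable_const (1:ℝ)
    | succ k ih =>
      have hIF : IndepFun (∏ j ∈ Finset.range k, g j) (g k) P :=
        hgindep.indepFun_prod_range_succ hgmeas k
      have ihint : Integrable (∏ j ∈ Finset.range k, g j) P := by
        rw [← heqfun]; exact ih.1
      have hmul : Integrable ((∏ j ∈ Finset.range k, g j) * g k) P :=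
        hIF.integrable_mul ihint (hgint k)
      have heq2 : (fun ω => ∏ j ∈ Finset.range (k+1), g j ω)
          = (∏ j ∈ Finset.range k, g j) * g k := by
        funext ω
        rw [Finset.prod_range_succ]
        simp [Finset.prod_apply]
      constructor
      · rw [heq2]; exact hmul
      · rw [heq2, hIF.integral_mul_eq_mul_integral ihint.aestronglyMeasurable (hgint k).aestronglyMeasurable, ← heqfun k, ih.2,
          (hgid k).integral_eq, pow_succ]
  -- pointwise bound
  have hpt : ∀ k ω, 1 + ‖x η k ω‖ ≤ (1 + ‖x₀‖) * ∏ j ∈ Finset.range k, (1 + η * L (γ j ω)) := by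
    intro k
    induction k with
    | zero => intro ω; simp [hx0]
    | succ k ih =>
      intro ω
      have hLk := (hLpos (γ k ω)).le
      have hstep : ‖x η (k+1) ω‖ ≤ ‖x η k ω‖ + η * (L (γ k ω) * (1 + ‖x η k ω‖)) := by
        rw [hrec]
        calc ‖x η k ω + η • h (x η k ω) (γ k ω) η‖
            ≤ ‖x η k ω‖ + ‖η • h (x η k ω) (γ k ω) η‖ := norm_add_le _ _
          _ = ‖x η k ω‖ + |η| * ‖h (x η k ω) (γ k ω) η‖ := by rw [norm_smul, Real.norm_eq_abs]
          _ = ‖x η k ω‖ + η * ‖h (x η k ω) (γ k ω) η‖ := by rw [abs_of_pos hη0]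
          _ ≤ ‖x η k ω‖ + η * (L (γ k ω) * (1 + ‖x η k ω‖)) := by
              have := hgrowth (x η k ω) (γ k ω) η
              nlinarith [norm_nonneg (x η k ω)]
      have hfac : 1 + ‖x η (k+1) ω‖ ≤ (1 + η * L (γ k ω)) * (1 + ‖x η k ω‖) := by
        nlinarith [norm_nonneg (x η k ω)]
      calc 1 + ‖x η (k+1) ω‖ ≤ (1 + η * L (γ k ω)) * (1 + ‖x η k ω‖) := hfac
        _ ≤ (1 + η * L (γ k ω)) * ((1 + ‖x₀‖) * ∏ j ∈ Finset.range k, (1 + η * L (γ j ω))) :=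
            mul_le_mul_of_nonneg_left (ih ω) (by positivity)
        _ = (1 + ‖x₀‖) * ∏ j ∈ Finset.range (k+1), (1 + η * L (γ j ω)) := by
            rw [Finset.prod_range_succ]; ring
  have hpt2 : ∀ k ω, ‖x η k ω‖ ^ (n+1)
      ≤ (1 + ‖x₀‖) ^ (n+1) * ∏ j ∈ Finset.range k, g j ω := by
    intro k ω
    have h1 : ‖x η k ω‖ ^ (n+1) ≤ (1 + ‖x η k ω‖) ^ (n+1) :=
      pow_le_pow_left₀ (norm_nonneg _) (by linarith [norm_nonneg (x η k ω)]) _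
    have h2 : (1 + ‖x η k ω‖) ^ (n+1)
        ≤ ((1 + ‖x₀‖) * ∏ j ∈ Finset.range k, (1 + η * L (γ j ω))) ^ (n+1) := by
      apply pow_le_pow_left₀ (by positivity) (hpt k ω)
    calc ‖x η k ω‖ ^ (n+1) ≤ ((1 + ‖x₀‖) * ∏ j ∈ Finset.range k, (1 + η * L (γ j ω))) ^ (n+1) :=
          le_trans h1 h2
      _ = (1 + ‖x₀‖) ^ (n+1) * ∏ j ∈ Finset.range k, (1 + η * L (γ j ω)) ^ (n+1) := by
          rw [mul_pow, Finset.prod_pow]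
      _ = (1 + ‖x₀‖) ^ (n+1) * ∏ j ∈ Finset.range k, g j ω := rfl
  -- bound on ∫ g 0
  have hI0nonneg : 0 ≤ ∫ ω, g 0 ω ∂P := integral_nonneg (hgnonneg 0)
  have hI0le : ∫ ω, g 0 ω ∂P ≤ 1 + η * B := by
    have hle : ∀ ω, g 0 ω ≤ 1 + η * (((n:ℝ)+1) * L (γ 0 ω) * (1 + L (γ 0 ω)) ^ n) := by
      intro ω
      have hL := (hLpos (γ 0 ω)).le
      have hηL : 0 ≤ η * L (γ 0 ω) := by positivity
      have h1 : g 0 ω ≤ 1 + ((n:ℝ)+1) * (η * L (γ 0 ω)) * (1 + η * L (γ 0 ω)) ^ n := by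
        have := aux_pow_succ n (η * L (γ 0 ω)) hηL
        simpa [hgdef, hfdef] using this
      have hXY : (1 + η * L (γ 0 ω)) ^ n ≤ (1 + L (γ 0 ω)) ^ n := by
        apply pow_le_pow_left₀ (by positivity) (by nlinarith)
      have h2 : ((n:ℝ)+1) * (η * L (γ 0 ω)) * (1 + η * L (γ 0 ω)) ^ n
          ≤ η * (((n:ℝ)+1) * L (γ 0 ω) * (1 + L (γ 0 ω)) ^ n) := by
        calc ((n:ℝ)+1) * (η * L (γ 0 ω)) * (1 + η * L (γ 0 ω)) ^ n
            = (((n:ℝ)+1) * η * L (γ 0 ω)) * (1 + η * L (γ 0 ω)) ^ n := by ring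
          _ ≤ (((n:ℝ)+1) * η * L (γ 0 ω)) * (1 + L (γ 0 ω)) ^ n :=
              mul_le_mul_of_nonneg_left hXY (by positivity)
          _ = η * (((n:ℝ)+1) * L (γ 0 ω) * (1 + L (γ 0 ω)) ^ n) := by ring
      linarith
    calc ∫ ω, g 0 ω ∂P
        ≤ ∫ ω, (1 + η * (((n:ℝ)+1) * L (γ 0 ω) * (1 + L (γ 0 ω)) ^ n)) ∂P :=
          integral_mono hg0int ((integrable_const (1:ℝ)).add (hBint.const_mul η)) hle
      _ = 1 + η * B := by
          rw [integral_add (integrable_const 1) (hBint.const_mul η),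
            integral_const, integral_const_mul]
          simp [hBdef]
  -- put everything together
  have hkη : (k : ℝ) * η ≤ T := by
    have h1 : (k : ℝ) ≤ ⌊T / η⌋₊ := Nat.cast_le.2 hk
    have h2 : (⌊T / η⌋₊ : ℝ) ≤ T / η := Nat.floor_le (div_nonneg hT.le hη0.le)
    have h3 : (k : ℝ) ≤ T / η := le_trans h1 h2
    calc (k : ℝ) * η ≤ (T / η) * η := mul_le_mul_of_nonneg_right h3 hη0.le
      _ = T := div_mul_cancel₀ T (ne_of_gt hη0)
  calc ∫ ω, ‖x η k ω‖ ^ (n+1) ∂P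
      ≤ ∫ ω, (1 + ‖x₀‖) ^ (n+1) * ∏ j ∈ Finset.range k, g j ω ∂P := by
        apply integral_mono_of_nonneg (ae_of_all _ fun ω => by positivity)
          ((hprod k).1.const_mul _) (ae_of_all _ (hpt2 k))
    _ = (1 + ‖x₀‖) ^ (n+1) * ∫ ω, ∏ j ∈ Finset.range k, g j ω ∂P := integral_const_mul _ _
    _ = (1 + ‖x₀‖) ^ (n+1) * (∫ ω, g 0 ω ∂P) ^ k := by rw [(hprod k).2]
    _ ≤ (1 + ‖x₀‖) ^ (n+1) * (1 + η * B) ^ k := by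
        apply mul_le_mul_of_nonneg_left (pow_le_pow_left₀ hI0nonneg hI0le k) (by positivity)
    _ ≤ (1 + ‖x₀‖) ^ (n+1) * Real.exp (T * B) := by
        apply mul_le_mul_of_nonneg_left ?_ (by positivity)
        calc (1 + η * B) ^ k ≤ Real.exp (η * B) ^ k := by
              apply pow_le_pow_left₀ (by positivity) ?_ k
              rw [add_comm]
              exact Real.add_one_le_exp (η * B)
          _ = Real.exp ((k : ℝ) * (η * B)) := by rw [← Real.exp_nat_mul]
          _ ≤ Real.exp (T * B) := by
              apply Real.exp_le_exp.2
              calc (k : ℝ) * (η * B) = ((k : ℝ) * η) * B := by ring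
                _ ≤ T * B := mul_le_mul_of_nonneg_right hkη hB0
end

section
/- Let γ be a Γ-valued random variable and (r, x) ↦ f_r(x) a measurable map from Γ × ℝ^d to ℝ such that f_γ(x) is integrable for each x, f_γ is almost surely continuously differentiable in x, ∇f_γ(x) is square integrable for each x, and f(x) := E f_γ(x) is continuously differentiable with ∇f(x) = E ∇f_γ(x). Define Σ(x) := E[(∇f_γ(x) − ∇f(x))(∇f_γ(x) − ∇f(x))^T]. For η > 0 and μ > 0 define the one-step momentum-SGD update from (v, x) ∈ ℝ^d × ℝ^d by v₁ := v − μηv − η∇f_γ(x), x₁ := x + ηv₁, and set Δ := (v₁ − v, x₁ − x) ∈ ℝ^{2d}. Then: (i) exactly, E Δ = η(−μv − ∇f(x), v) + η²(0, −μv − ∇f(x)); (ii) writing g := μv + ∇f(x), the second-moment matrix satisfies E[ΔΔ^T] = η² · [ (g g^T + Σ(x), −g v^T) ; (−v g^T, v v^T) ] + R, where, provided there are positive constants κ₁, κ₂ with E|∇f_γ(x)|² ≤ κ₁(1 + |x|^{2κ₂}) for all x, the remainder satisfies, for all η ∈ (0,1), |R| ≤ K(v, x) η³ for some function K of polynomial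 growth in (v, x) independent of η. -/
set_option maxHeartbeats 1000000

open MeasureTheory

/-- The Frobenius norm of a real square matrix. -/
noncomputable def frobNorm {n : Type*} [Fintype n] (M : Matrix n n ℝ) : ℝ :=
  Real.sqrt (∑ i, ∑ j, (M i j) ^ 2)

/-- product of two L² functions is integrable. -/
lemma MSGD.mulInt {Ω : Type*} [MeasurableSpace Ω] {P : Measure Ω} {f g : Ω → ℝ}
    (hf : MemLp f 2 P) (hg : MemLp g 2 P) : Integrable (fun ω => f ω * g ω) P := by
  refine (hf.integrable_sq.add hg.integrable_sq).mono'
    (hf.aestronglyMeasurable.mul hg.aestronglyMeasurable) ?_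
  filter_upwards with ω
  simp only [Pi.add_apply, Real.norm_eq_abs, abs_mul]
  nlinarith [sq_nonneg (|f ω| - |g ω|), abs_nonneg (f ω), abs_nonneg (g ω),
    sq_abs (f ω), sq_abs (g ω)]

/-- coordinate bound in Euclidean space. -/
lemma MSGD.coord_abs {d : ℕ} (y : EuclideanSpace ℝ (Fin d)) (i : Fin d) : |y i| ≤ ‖y‖ := by
  rw [EuclideanSpace.norm_eq]
  calc |y i| = Real.sqrt (‖y i‖ ^ 2) := by
        rw [Real.norm_eq_abs, sq_abs, Real.sqrt_sq_eq_abs]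
    _ ≤ Real.sqrt (∑ j, ‖y j‖ ^ 2) := by
        apply Real.sqrt_le_sqrt
        exact Finset.single_le_sum (f := fun j => ‖y j‖ ^ 2)
          (fun j _ => by positivity) (Finset.mem_univ i)

lemma MSGD.one_le_pow {u : ℝ} (hu : 1 ≤ u) (n : ℕ) : 1 ≤ u ^ n := by
  have := pow_le_pow_right₀ hu (Nat.zero_le n)
  simpa using this

lemma MSGD.one_add_pow {t : ℝ} (ht : 0 ≤ t) (n : ℕ) : (1 + t) ^ n ≤ 2 ^ n * (1 + t ^ n) := by
  rcases le_total t 1 with h | h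
  · have h1 : (1 + t) ^ n ≤ 2 ^ n := pow_le_pow_left₀ (by linarith) (by linarith) n
    nlinarith [pow_nonneg ht n, pow_pos (by norm_num : (0:ℝ) < 2) n]
  · have h1 : (1 + t) ^ n ≤ (2 * t) ^ n := pow_le_pow_left₀ (by linarith) (by linarith) n
    rw [mul_pow] at h1
    nlinarith [pow_pos (by norm_num : (0:ℝ) < 2) n]

/-- Moment expansions for the one-step momentum-SGD increment
`Δ = (v₁ − v, x₁ − x)` with `v₁ = v − μηv − η∇f_γ(x)`, `x₁ = x + ηv₁`:
(i) the exact first moment; (ii) the second-moment block matrix up to an `O(η³)`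
remainder of polynomial growth in `(v, x)`, provided `E|∇f_γ(x)|²` has polynomial growth. -/
theorem msgd_one_step_moment_expansion
    {d : ℕ} {Ω : Type*} [MeasurableSpace Ω] (P : Measure Ω) [IsProbabilityMeasure P]
    {Γ : Type*} [MeasurableSpace Γ] (γ : Ω → Γ) (hγ : Measurable γ)
    (f : Γ → EuclideanSpace ℝ (Fin d) → ℝ)
    (hfmeas : Measurable (Function.uncurry f))
    (hfint : ∀ x, Integrable (fun ω => f (γ ω) x) P)
    (hfC1 : ∀ᵐ ω ∂P, ContDiff ℝ 1 (f (γ ω)))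
    (hgradL2 : ∀ x, MemLp (fun ω => gradient (f (γ ω)) x) 2 P)
    (F : EuclideanSpace ℝ (Fin d) → ℝ)
    (hF : ∀ x, F x = ∫ ω, f (γ ω) x ∂P)
    (hFC1 : ContDiff ℝ 1 F)
    (hFgrad : ∀ x, gradient F x = ∫ ω, gradient (f (γ ω)) x ∂P)
    (Sig : EuclideanSpace ℝ (Fin d) → Matrix (Fin d) (Fin d) ℝ)
    (hSig : ∀ x i j, Sig x i j =
      ∫ ω, (gradient (f (γ ω)) x i - gradient F x i) *
        (gradient (f (γ ω)) x j - gradient F x j) ∂P)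
    (μ : ℝ) (hμ : 0 < μ)
    (Δv Δx : ℝ → EuclideanSpace ℝ (Fin d) → EuclideanSpace ℝ (Fin d) → Ω →
      EuclideanSpace ℝ (Fin d))
    (hΔv : ∀ η v x ω, Δv η v x ω = -((μ * η) • v) - η • gradient (f (γ ω)) x)
    (hΔx : ∀ η v x ω, Δx η v x ω = η • (v + Δv η v x ω)) :
    -- (i) exact first moment
    ((∀ η : ℝ, 0 < η → ∀ v x,
      (∫ ω, Δv η v x ω ∂P) = η • (-(μ • v) - gradient F x) ∧
      (∫ ω, Δx η v x ω ∂P) = η • v + (η ^ 2) • (-(μ • v) - gradient F x))) ∧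
    -- (ii) second moments up to a remainder of order η³ with polynomial-growth constant
    (∀ κ₁ : ℝ, ∀ κ₂ : ℕ, 0 < κ₁ → 0 < κ₂ →
      (∀ y, ∫ ω, ‖gradient (f (γ ω)) y‖ ^ 2 ∂P ≤ κ₁ * (1 + ‖y‖ ^ (2 * κ₂))) →
      ∃ K : EuclideanSpace ℝ (Fin d) → EuclideanSpace ℝ (Fin d) → ℝ,
        (∃ c₁ : ℝ, ∃ c₂ : ℕ, 0 < c₁ ∧ 0 < c₂ ∧
          ∀ v x, |K v x| ≤ c₁ * (1 + (‖v‖ ^ 2 + ‖x‖ ^ 2) ^ c₂)) ∧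
        ∀ η : ℝ, 0 < η → η < 1 → ∀ v x,
          ∃ R : Matrix (Fin d ⊕ Fin d) (Fin d ⊕ Fin d) ℝ,
            (∀ i j : Fin d,
              (∫ ω, Δv η v x ω i * Δv η v x ω j ∂P) =
                η ^ 2 * ((μ • v + gradient F x) i * (μ • v + gradient F x) j + Sig x i j)
                  + R (Sum.inl i) (Sum.inl j) ∧
              (∫ ω, Δv η v x ω i * Δx η v x ω j ∂P) =
                η ^ 2 * (-((μ • v + gradient F x) i * v j)) + R (Sum.inl i) (Sum.inr j) ∧
              (∫ ω, Δx η v x ω i * Δv η v x ω j ∂P) =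
                η ^ 2 * (-(v i * (μ • v + gradient F x) j)) + R (Sum.inr i) (Sum.inl j) ∧
              (∫ ω, Δx η v x ω i * Δx η v x ω j ∂P) =
                η ^ 2 * (v i * v j) + R (Sum.inr i) (Sum.inr j)) ∧
            frobNorm R ≤ K v x * η ^ 3) := by
  constructor
  · -- part (i)
    intro η hη v x
    have hInt : Integrable (fun ω => gradient (f (γ ω)) x) P :=
      (hgradL2 x).integrable one_le_two
    have hInt' : Integrable (fun ω => η • gradient (f (γ ω)) x) P := hInt.smul η
    have hΔvfun : (fun ω => Δv η v x ω)
        = (fun ω => -((μ * η) • v) - η • gradient (f (γ ω)) x) := funext (hΔv η v x)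
    have h1 : (∫ ω, Δv η v x ω ∂P) = -((μ * η) • v) - η • gradient F x := by
      rw [hΔvfun, integral_sub (integrable_const _) hInt', integral_smul,
        integral_const, ← hFgrad x]
      simp
    refine ⟨by rw [h1]; module, ?_⟩
    have hΔvInt : Integrable (fun ω => Δv η v x ω) P := by
      rw [hΔvfun]; exact (integrable_const _).sub hInt'
    have hΔxfun : (fun ω => Δx η v x ω) = fun ω => η • (v + Δv η v x ω) :=
      funext (hΔx η v x)
    rw [hΔxfun, integral_smul, integral_add (integrable_const _) hΔvInt, integral_const, h1]
    simp only [measure_univ, probReal_univ, ENNReal.toReal_one, one_smul]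
    module
  · -- part (ii)
    intro κ₁ κ₂ hκ₁ hκ₂ hbnd
    set K : EuclideanSpace ℝ (Fin d) → EuclideanSpace ℝ (Fin d) → ℝ := fun v x =>
      2 * (d + 1) * (2 * ‖v‖ * (μ * ‖v‖ + 1 + κ₁ * (1 + ‖x‖ ^ (2 * κ₂)))
        + 2 * μ ^ 2 * ‖v‖ ^ 2 + 2 * κ₁ * (1 + ‖x‖ ^ (2 * κ₂)) + 1) with hK
    have hKnonneg : ∀ v x, 0 ≤ K v x := by
      intro v x
      have h2 : (0:ℝ) ≤ ‖x‖ ^ (2 * κ₂) := by positivity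
      simp only [hK]
      have : (0:ℝ) ≤ μ * ‖v‖ + 1 + κ₁ * (1 + ‖x‖ ^ (2 * κ₂)) := by
        nlinarith [norm_nonneg v, mul_nonneg hμ.le (norm_nonneg v), hκ₁.le]
      nlinarith [norm_nonneg v, sq_nonneg ‖v‖, hκ₁.le, hμ.le,
        mul_nonneg (mul_nonneg (by norm_num : (0:ℝ) ≤ 2) (norm_nonneg v)) this,
        sq_nonneg μ, mul_nonneg (sq_nonneg μ) (sq_nonneg ‖v‖),
        mul_nonneg hκ₁.le (by linarith : (0:ℝ) ≤ 1 + ‖x‖ ^ (2 * κ₂)),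
        Nat.cast_nonneg (α := ℝ) d]
    refine ⟨K, ⟨2 * (d + 1) * (2 * μ ^ 2 + 2 * μ + 8 * κ₁ + 3) * 2 ^ (κ₂ + 1),
      κ₂ + 1, by positivity, Nat.succ_pos _, ?_⟩, ?_⟩
    · -- polynomial growth of K
      intro v x
      set t : ℝ := ‖v‖ ^ 2 + ‖x‖ ^ 2 with htdef
      set u : ℝ := 1 + t with hudef
      have ht0 : 0 ≤ t := by positivity
      have hu1 : (1:ℝ) ≤ u := by simp only [hudef]; linarith
      have hu0 : (0:ℝ) ≤ u := by linarith
      set U : ℝ := u ^ (κ₂ + 1) with hUdef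
      have hU1 : (1:ℝ) ≤ U := MSGD.one_le_pow hu1 _
      have huU : u ≤ U := by
        calc u = u ^ 1 := (pow_one u).symm
          _ ≤ U := pow_le_pow_right₀ hu1 (by omega)
      have hv : ‖v‖ ≤ u := by
        simp only [hudef, htdef]
        nlinarith [norm_nonneg v, sq_nonneg (‖v‖ - 1), sq_nonneg (‖x‖)]
      have hv2 : ‖v‖ ^ 2 ≤ u := by
        simp only [hudef, htdef]; nlinarith [sq_nonneg (‖x‖)]
      have hX : ‖x‖ ^ (2 * κ₂) ≤ u ^ κ₂ := by
        rw [pow_mul]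
        refine pow_le_pow_left₀ (by positivity) ?_ κ₂
        simp only [hudef, htdef]; nlinarith [sq_nonneg ‖v‖]
      have huk : u ^ κ₂ ≤ U := pow_le_pow_right₀ hu1 (by omega)
      have h1X : 1 + ‖x‖ ^ (2 * κ₂) ≤ 2 * u ^ κ₂ := by
        have := MSGD.one_le_pow hu1 κ₂
        linarith
      have hvX : ‖v‖ * (1 + ‖x‖ ^ (2 * κ₂)) ≤ 2 * U := by
        have hm := mul_le_mul hv h1X (by positivity) hu0
        have huu : u * (2 * u ^ κ₂) = 2 * U := by rw [hUdef, pow_succ]; ring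
        linarith [hm.trans_eq huu]
      have hKle : K v x ≤ 2 * (d + 1) * (2 * μ ^ 2 + 2 * μ + 8 * κ₁ + 3) * U := by
        simp only [hK]
        have hd0 : (0:ℝ) ≤ 2 * ((d:ℝ) + 1) := by positivity
        have hinner : 2 * ‖v‖ * (μ * ‖v‖ + 1 + κ₁ * (1 + ‖x‖ ^ (2 * κ₂)))
            + 2 * μ ^ 2 * ‖v‖ ^ 2 + 2 * κ₁ * (1 + ‖x‖ ^ (2 * κ₂)) + 1
            ≤ (2 * μ ^ 2 + 2 * μ + 8 * κ₁ + 3) * U := by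
          have e1 : 2 * ‖v‖ * (μ * ‖v‖ + 1 + κ₁ * (1 + ‖x‖ ^ (2 * κ₂)))
              = 2 * μ * ‖v‖ ^ 2 + 2 * ‖v‖ + 2 * κ₁ * (‖v‖ * (1 + ‖x‖ ^ (2 * κ₂)))
              := by ring
          rw [e1]
          have b1 : 2 * μ * ‖v‖ ^ 2 ≤ 2 * μ * U := by nlinarith
          have b2 : 2 * ‖v‖ ≤ 2 * U := by linarith [hv.trans huU]
          have b3 : 2 * κ₁ * (‖v‖ * (1 + ‖x‖ ^ (2 * κ₂))) ≤ 2 * κ₁ * (2 * U) := by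
            nlinarith
          have b4 : 2 * μ ^ 2 * ‖v‖ ^ 2 ≤ 2 * μ ^ 2 * U := by
            nlinarith [sq_nonneg μ]
          have b5 : 2 * κ₁ * (1 + ‖x‖ ^ (2 * κ₂)) ≤ 2 * κ₁ * (2 * U) := by
            nlinarith [h1X, huk]
          linarith
        calc 2 * ((d:ℝ) + 1) * (2 * ‖v‖ * (μ * ‖v‖ + 1 + κ₁ * (1 + ‖x‖ ^ (2 * κ₂)))
              + 2 * μ ^ 2 * ‖v‖ ^ 2 + 2 * κ₁ * (1 + ‖x‖ ^ (2 * κ₂)) + 1)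
            ≤ 2 * ((d:ℝ) + 1) * ((2 * μ ^ 2 + 2 * μ + 8 * κ₁ + 3) * U) :=
              mul_le_mul_of_nonneg_left hinner hd0
          _ = 2 * ((d:ℝ) + 1) * (2 * μ ^ 2 + 2 * μ + 8 * κ₁ + 3) * U := by ring
      have hUb : U ≤ 2 ^ (κ₂ + 1) * (1 + t ^ (κ₂ + 1)) := MSGD.one_add_pow ht0 (κ₂ + 1)
      rw [abs_of_nonneg (hKnonneg v x)]
      have hc0 : (0:ℝ) ≤ 2 * ((d:ℝ) + 1) * (2 * μ ^ 2 + 2 * μ + 8 * κ₁ + 3) := by positivity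
      calc K v x ≤ 2 * (d + 1) * (2 * μ ^ 2 + 2 * μ + 8 * κ₁ + 3) * U := hKle
        _ ≤ 2 * (d + 1) * (2 * μ ^ 2 + 2 * μ + 8 * κ₁ + 3)
            * (2 ^ (κ₂ + 1) * (1 + t ^ (κ₂ + 1))) := mul_le_mul_of_nonneg_left hUb hc0
        _ = 2 * (d + 1) * (2 * μ ^ 2 + 2 * μ + 8 * κ₁ + 3) * 2 ^ (κ₂ + 1)
            * (1 + t ^ (κ₂ + 1)) := by ring
    · -- the main second-moment estimates
      intro η hη hη1 v x
      have hL2 : MemLp (fun ω => gradient (f (γ ω)) x) 2 P := hgradL2 x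
      have hInt : Integrable (fun ω => gradient (f (γ ω)) x) P := hL2.integrable one_le_two
      have hc : ∀ i, MemLp (fun ω => gradient (f (γ ω)) x i) 2 P :=
        fun i => (EuclideanSpace.proj (𝕜 := ℝ) i).comp_memLp' hL2
      have hA : ∀ i, (∫ ω, gradient (f (γ ω)) x i ∂P) = gradient F x i := by
        intro i
        have h4 := (EuclideanSpace.proj (𝕜 := ℝ) i).integral_comp_comm hInt
        rw [hFgrad x]
        simpa using h4
      -- the shifted field
      set h : Fin d → Ω → ℝ := fun i ω => μ * v i + gradient (f (γ ω)) x i with hhdef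
      set g : Fin d → ℝ := fun i => μ * v i + gradient F x i with hgdef
      have hgc : ∀ i, (μ • v + gradient F x) i = g i := by
        intro i
        simp [hgdef, PiLp.add_apply, PiLp.smul_apply, smul_eq_mul]
      have hhL2 : ∀ i, MemLp (h i) 2 P := by
        intro i
        simp only [hhdef]
        exact (memLp_const (μ * v i)).add (hc i)
      have hhInt : ∀ i, Integrable (h i) P := fun i => (hhL2 i).integrable one_le_two
      have hB : ∀ i, (∫ ω, h i ω ∂P) = g i := by
        intro i
        simp only [hhdef, hgdef]
        rw [integral_add (integrable_const _) ((hc i).integrable one_le_two),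
          integral_const, hA i]
        simp
      have hmul : ∀ i j, Integrable (fun ω => h i ω * h j ω) P :=
        fun i j => MSGD.mulInt (hhL2 i) (hhL2 j)
      set Hm : Fin d → Fin d → ℝ := fun i j => ∫ ω, h i ω * h j ω ∂P with hHm
      have hHme : ∀ i j, (∫ ω, h i ω * h j ω ∂P) = Hm i j := fun i j => by
        simp only [hHm]
      -- key second-moment identity
      have key : ∀ i j, Hm i j = g i * g j + Sig x i j := by
        intro i j
        have hptw : ∀ ω, (gradient (f (γ ω)) x i - gradient F x i) *
            (gradient (f (γ ω)) x j - gradient F x j)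
            = h i ω * h j ω - (g i * h j ω + g j * h i ω) + g i * g j := by
          intro ω; simp only [hhdef, hgdef]; ring
        have I1 : Integrable (fun ω => g i * h j ω) P := (hhInt j).const_mul (g i)
        have I2 : Integrable (fun ω => g j * h i ω) P := (hhInt i).const_mul (g j)
        have I3 : Integrable (fun ω => g i * h j ω + g j * h i ω) P := I1.add I2
        have I4 : Integrable (fun ω => h i ω * h j ω - (g i * h j ω + g j * h i ω)) P :=
          (hmul i j).sub I3
        have hSig' := hSig x i j
        rw [integral_congr_ae (Filter.Eventually.of_forall hptw)] at hSig'
        rw [integral_add I4 (integrable_const _), integral_sub (hmul i j) I3,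
          integral_add I1 I2,
          integral_const_mul, integral_const_mul, hB i, hB j, integral_const,
          hHme i j] at hSig'
        simp only [measure_univ, probReal_univ, ENNReal.toReal_one, one_smul, smul_eq_mul] at hSig'
        rw [hSig']
        ring
      -- coordinates of the increments
      have hΔvc : ∀ i ω, Δv η v x ω i = -(η * h i ω) := by
        intro i ω
        rw [hΔv]
        simp only [hhdef, PiLp.sub_apply, PiLp.neg_apply, PiLp.smul_apply, smul_eq_mul]
        ring
      have hΔxc : ∀ i ω, Δx η v x ω i = η * v i - η ^ 2 * h i ω := by
        intro i ω
        rw [hΔx]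
        simp only [PiLp.smul_apply, PiLp.add_apply, smul_eq_mul, hΔvc i ω]
        ring
      -- the remainder matrix
      set Rm : Matrix (Fin d ⊕ Fin d) (Fin d ⊕ Fin d) ℝ := fun p q =>
        Sum.elim
          (fun i => Sum.elim (fun _ => (0:ℝ)) (fun j => η ^ 3 * Hm i j) q)
          (fun i => Sum.elim (fun j => η ^ 3 * Hm i j)
            (fun j => -(η ^ 3 * (v i * g j + g i * v j)) + η ^ 4 * Hm i j) q) p
        with hRm
      have hRvv : ∀ i j, Rm (Sum.inl i) (Sum.inl j) = 0 := fun i j => rfl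
      have hRvx : ∀ i j, Rm (Sum.inl i) (Sum.inr j) = η ^ 3 * Hm i j := fun i j => rfl
      have hRxv : ∀ i j, Rm (Sum.inr i) (Sum.inl j) = η ^ 3 * Hm i j := fun i j => rfl
      have hRxx : ∀ i j, Rm (Sum.inr i) (Sum.inr j)
          = -(η ^ 3 * (v i * g j + g i * v j)) + η ^ 4 * Hm i j := fun i j => rfl
      refine ⟨Rm, ?_, ?_⟩
      · intro i j
        refine ⟨?_, ?_, ?_, ?_⟩
        · have hptw : ∀ ω, Δv η v x ω i * Δv η v x ω j = η ^ 2 * (h i ω * h j ω) := by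
            intro ω; rw [hΔvc, hΔvc]; ring
          rw [integral_congr_ae (Filter.Eventually.of_forall hptw), integral_const_mul,
            hHme i j, hRvv, hgc, hgc, key i j]
          ring
        · have hptw : ∀ ω, Δv η v x ω i * Δx η v x ω j
              = (-(η ^ 2 * v j)) * h i ω + η ^ 3 * (h i ω * h j ω) := by
            intro ω; rw [hΔvc, hΔxc]; ring
          have J1 : Integrable (fun ω => (-(η ^ 2 * v j)) * h i ω) P :=
            (hhInt i).const_mul _
          have J2 : Integrable (fun ω => η ^ 3 * (h i ω * h j ω)) P :=
            (hmul i j).const_mul _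
          rw [integral_congr_ae (Filter.Eventually.of_forall hptw),
            integral_add J1 J2,
            integral_const_mul, integral_const_mul, hB i, hHme i j, hRvx, hgc]
          ring
        · have hptw : ∀ ω, Δx η v x ω i * Δv η v x ω j
              = (-(η ^ 2 * v i)) * h j ω + η ^ 3 * (h i ω * h j ω) := by
            intro ω; rw [hΔvc, hΔxc]; ring
          have J1 : Integrable (fun ω => (-(η ^ 2 * v i)) * h j ω) P :=
            (hhInt j).const_mul _
          have J2 : Integrable (fun ω => η ^ 3 * (h i ω * h j ω)) P :=
            (hmul i j).const_mul _
          rw [integral_congr_ae (Filter.Eventually.of_forall hptw),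
            integral_add J1 J2,
            integral_const_mul, integral_const_mul, hB j, hHme i j, hRxv, hgc]
          ring
        · have hptw : ∀ ω, Δx η v x ω i * Δx η v x ω j
              = η ^ 2 * (v i * v j) + (-(η ^ 3 * v i)) * h j ω
                + (-(η ^ 3 * v j)) * h i ω + η ^ 4 * (h i ω * h j ω) := by
            intro ω; rw [hΔxc, hΔxc]; ring
          have J1 : Integrable (fun ω => (-(η ^ 3 * v i)) * h j ω) P :=
            (hhInt j).const_mul _
          have J2 : Integrable (fun ω => (-(η ^ 3 * v j)) * h i ω) P :=
            (hhInt i).const_mul _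
          have J3 : Integrable (fun ω => η ^ 4 * (h i ω * h j ω)) P :=
            (hmul i j).const_mul _
          have J4 : Integrable (fun _ : Ω => η ^ 2 * (v i * v j)) P := integrable_const _
          have J5 : Integrable (fun ω => η ^ 2 * (v i * v j)
              + (-(η ^ 3 * v i)) * h j ω) P := J4.add J1
          have J6 : Integrable (fun ω => η ^ 2 * (v i * v j)
              + (-(η ^ 3 * v i)) * h j ω + (-(η ^ 3 * v j)) * h i ω) P := J5.add J2
          rw [integral_congr_ae (Filter.Eventually.of_forall hptw),
            integral_add J6 J3, integral_add J5 J2, integral_add J4 J1,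
            integral_const, integral_const_mul, integral_const_mul, integral_const_mul,
            hB i, hB j, hHme i j, hRxx]
          simp only [measure_univ, probReal_univ, ENNReal.toReal_one, one_smul, smul_eq_mul]
          ring
      · -- the Frobenius norm bound
        have hcoord : ∀ i ω, h i ω = (μ • v + gradient (f (γ ω)) x) i := by
          intro i ω
          simp [hhdef, PiLp.add_apply, PiLp.smul_apply, smul_eq_mul]
        have hvecL2 : MemLp (fun ω => μ • v + gradient (f (γ ω)) x) 2 P :=
          (memLp_const (μ • v)).add hL2
        have hSint : Integrable (fun ω => ‖μ • v + gradient (f (γ ω)) x‖ ^ 2) P :=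
          hvecL2.norm.integrable_sq
        have hgrSint : Integrable (fun ω => ‖gradient (f (γ ω)) x‖ ^ 2) P :=
          hL2.norm.integrable_sq
        set S : ℝ := ∫ ω, ‖μ • v + gradient (f (γ ω)) x‖ ^ 2 ∂P with hSdef
        have hS0 : 0 ≤ S := integral_nonneg (fun ω => by positivity)
        have hHmS : ∀ i j, |Hm i j| ≤ S := by
          intro i j
          rw [← hHme i j]
          have habsint : Integrable (fun ω => |h i ω| * |h j ω|) P := by
            have := (hmul i j).abs
            simpa [abs_mul] using this
          calc |∫ ω, h i ω * h j ω ∂P| ≤ ∫ ω, |h i ω| * |h j ω| ∂P := by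
                have := norm_integral_le_integral_norm (fun ω => h i ω * h j ω) (μ := P)
                simpa [Real.norm_eq_abs, abs_mul] using this
            _ ≤ ∫ ω, ‖μ • v + gradient (f (γ ω)) x‖ ^ 2 ∂P := by
                apply integral_mono habsint hSint
                intro ω
                dsimp only
                rw [hcoord i ω, hcoord j ω]
                have h1 := MSGD.coord_abs (μ • v + gradient (f (γ ω)) x) i
                have h2 := MSGD.coord_abs (μ • v + gradient (f (γ ω)) x) j
                nlinarith [abs_nonneg ((μ • v + gradient (f (γ ω)) x) i),
                  abs_nonneg ((μ • v + gradient (f (γ ω)) x) j),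
                  sq_abs ((μ • v + gradient (f (γ ω)) x) i),
                  sq_abs ((μ • v + gradient (f (γ ω)) x) j),
                  norm_nonneg (μ • v + gradient (f (γ ω)) x)]
        set M : ℝ := ∫ ω, ‖gradient (f (γ ω)) x‖ ^ 2 ∂P with hMdef
        have hM0 : 0 ≤ M := integral_nonneg (fun ω => by positivity)
        have hMb : M ≤ κ₁ * (1 + ‖x‖ ^ (2 * κ₂)) := hbnd x
        have hSb : S ≤ 2 * μ ^ 2 * ‖v‖ ^ 2 + 2 * M := by
          rw [hSdef]
          calc ∫ ω, ‖μ • v + gradient (f (γ ω)) x‖ ^ 2 ∂P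
              ≤ ∫ ω, (2 * μ ^ 2 * ‖v‖ ^ 2 + 2 * ‖gradient (f (γ ω)) x‖ ^ 2) ∂P := by
                apply integral_mono hSint ((integrable_const _).add (hgrSint.const_mul _))
                intro ω
                dsimp only [Pi.add_apply]
                have h1 : ‖μ • v + gradient (f (γ ω)) x‖
                    ≤ μ * ‖v‖ + ‖gradient (f (γ ω)) x‖ := by
                  calc ‖μ • v + gradient (f (γ ω)) x‖
                      ≤ ‖μ • v‖ + ‖gradient (f (γ ω)) x‖ := norm_add_le _ _
                    _ = μ * ‖v‖ + ‖gradient (f (γ ω)) x‖ := by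
                        rw [norm_smul, Real.norm_eq_abs, abs_of_pos hμ]
                have h2 : (0:ℝ) ≤ μ * ‖v‖ + ‖gradient (f (γ ω)) x‖ := by
                  have := mul_nonneg hμ.le (norm_nonneg v)
                  have := norm_nonneg (gradient (f (γ ω)) x)
                  linarith
                have h3 := mul_le_mul h1 h1 (norm_nonneg _) h2
                nlinarith [sq_nonneg (μ * ‖v‖ - ‖gradient (f (γ ω)) x‖)]
            _ = 2 * μ ^ 2 * ‖v‖ ^ 2 + 2 * M := by
                rw [integral_add (integrable_const _) (hgrSint.const_mul _),
                  integral_const, integral_const_mul]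
                simp [hMdef]
        have hGb : ‖gradient F x‖ ≤ 1 + M := by
          calc ‖gradient F x‖ = ‖∫ ω, gradient (f (γ ω)) x ∂P‖ := by rw [hFgrad x]
            _ ≤ ∫ ω, ‖gradient (f (γ ω)) x‖ ∂P := norm_integral_le_integral_norm _
            _ ≤ ∫ ω, (1 + ‖gradient (f (γ ω)) x‖ ^ 2) ∂P := by
                apply integral_mono hInt.norm ((integrable_const _).add hgrSint)
                intro ω
                dsimp only [Pi.add_apply]
                nlinarith [norm_nonneg (gradient (f (γ ω)) x),
                  sq_nonneg (‖gradient (f (γ ω)) x‖ - 1)]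
            _ = 1 + M := by
                rw [integral_add (integrable_const _) hgrSint, integral_const]
                simp [hMdef]
        have hgco : ∀ i, |g i| ≤ μ * ‖v‖ + 1 + M := by
          intro i
          have h5 : |g i| ≤ ‖μ • v + gradient F x‖ := by
            have h6 := MSGD.coord_abs (μ • v + gradient F x) i
            rwa [hgc i] at h6
          calc |g i| ≤ ‖μ • v + gradient F x‖ := h5
            _ ≤ ‖μ • v‖ + ‖gradient F x‖ := norm_add_le _ _
            _ = μ * ‖v‖ + ‖gradient F x‖ := by
                rw [norm_smul, Real.norm_eq_abs, abs_of_pos hμ]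
            _ ≤ μ * ‖v‖ + (1 + M) := by linarith
            _ = μ * ‖v‖ + 1 + M := by ring
        have hvco : ∀ i, |v i| ≤ ‖v‖ := fun i => MSGD.coord_abs v i
        set B : ℝ := 2 * ‖v‖ * (μ * ‖v‖ + 1 + M) + 2 * μ ^ 2 * ‖v‖ ^ 2 + 2 * M + 1
          with hBdef
        have hB0 : 0 ≤ B := by
          simp only [hBdef]
          nlinarith [norm_nonneg v, mul_nonneg hμ.le (norm_nonneg v), hM0,
            sq_nonneg μ, sq_nonneg ‖v‖, mul_nonneg (sq_nonneg μ) (sq_nonneg ‖v‖)]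
        have hSB : S ≤ B := by
          simp only [hBdef]
          nlinarith [norm_nonneg v, mul_nonneg hμ.le (norm_nonneg v), hM0, hSb]
        have hentry : ∀ p q, |Rm p q| ≤ η ^ 3 * B := by
          have hη3 : (0:ℝ) < η ^ 3 := by positivity
          rintro (i | i) (j | j)
          · rw [hRvv]
            simp only [abs_zero]
            positivity
          · rw [hRvx, abs_mul, abs_of_pos hη3]
            exact mul_le_mul_of_nonneg_left ((hHmS i j).trans hSB) hη3.le
          · rw [hRxv, abs_mul, abs_of_pos hη3]
            exact mul_le_mul_of_nonneg_left ((hHmS i j).trans hSB) hη3.le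
          · rw [hRxx]
            have h1 : |(-(η ^ 3 * (v i * g j + g i * v j)) + η ^ 4 * Hm i j)|
                ≤ η ^ 3 * |v i * g j + g i * v j| + η ^ 4 * |Hm i j| := by
              calc |(-(η ^ 3 * (v i * g j + g i * v j)) + η ^ 4 * Hm i j)|
                  ≤ |(-(η ^ 3 * (v i * g j + g i * v j)))| + |η ^ 4 * Hm i j| :=
                    abs_add_le _ _
                _ = η ^ 3 * |v i * g j + g i * v j| + η ^ 4 * |Hm i j| := by
                    rw [abs_neg, abs_mul, abs_mul, abs_of_pos hη3,
                      abs_of_pos (by positivity : (0:ℝ) < η ^ 4)]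
            have h2 : |v i * g j + g i * v j| ≤ 2 * ‖v‖ * (μ * ‖v‖ + 1 + M) := by
              calc |v i * g j + g i * v j| ≤ |v i * g j| + |g i * v j| := abs_add_le _ _
                _ = |v i| * |g j| + |g i| * |v j| := by rw [abs_mul, abs_mul]
                _ ≤ ‖v‖ * (μ * ‖v‖ + 1 + M) + (μ * ‖v‖ + 1 + M) * ‖v‖ := by
                    have hvi := hvco i; have hvj := hvco j
                    have hgi := hgco i; have hgj := hgco j
                    have h3 : (0:ℝ) ≤ μ * ‖v‖ + 1 + M := by
                      nlinarith [mul_nonneg hμ.le (norm_nonneg v), hM0]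
                    have h4 := abs_nonneg (v i); have h5 := abs_nonneg (v j)
                    have h6 := abs_nonneg (g i); have h7 := abs_nonneg (g j)
                    have h8 := norm_nonneg v
                    nlinarith
                _ = 2 * ‖v‖ * (μ * ‖v‖ + 1 + M) := by ring
            have h3 : η ^ 4 * |Hm i j| ≤ η ^ 3 * S := by
              have hH := hHmS i j
              have habs0 := abs_nonneg (Hm i j)
              have h9 : η ^ 4 ≤ η ^ 3 := by nlinarith [pow_pos hη 3]
              nlinarith [pow_pos hη 3, pow_pos hη 4]
            calc |(-(η ^ 3 * (v i * g j + g i * v j)) + η ^ 4 * Hm i j)|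
                ≤ η ^ 3 * |v i * g j + g i * v j| + η ^ 4 * |Hm i j| := h1
              _ ≤ η ^ 3 * (2 * ‖v‖ * (μ * ‖v‖ + 1 + M)) + η ^ 3 * S := by
                  have := mul_le_mul_of_nonneg_left h2 hη3.le
                  linarith
              _ ≤ η ^ 3 * B := by
                  simp only [hBdef]
                  nlinarith [hSb, hS0, hM0]
        -- sum the squares
        have hsum : ∑ p, ∑ q, (Rm p q) ^ 2 ≤ ((2 * d : ℝ) * (η ^ 3 * B)) ^ 2 := by
          have hterm : ∀ p q, (Rm p q) ^ 2 ≤ (η ^ 3 * B) ^ 2 := by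
            intro p q
            have h10 := hentry p q
            nlinarith [abs_nonneg (Rm p q), sq_abs (Rm p q)]
          calc ∑ p, ∑ q, (Rm p q) ^ 2
              ≤ ∑ (_ : Fin d ⊕ Fin d), ∑ (_ : Fin d ⊕ Fin d), (η ^ 3 * B) ^ 2 :=
                Finset.sum_le_sum (fun p _ => Finset.sum_le_sum (fun q _ => hterm p q))
            _ = ((d + d : ℕ) : ℝ) * (((d + d : ℕ) : ℝ) * (η ^ 3 * B) ^ 2) := by
                simp [Finset.sum_const, Fintype.card_sum, Fintype.card_fin, nsmul_eq_mul]
            _ ≤ ((2 * d : ℝ) * (η ^ 3 * B)) ^ 2 := by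
                push_cast
                nlinarith [sq_nonneg (η ^ 3 * B)]
        have hfrob : frobNorm Rm ≤ (2 * d : ℝ) * (η ^ 3 * B) := by
          unfold frobNorm
          calc Real.sqrt (∑ i, ∑ j, (Rm i j) ^ 2)
              ≤ Real.sqrt (((2 * d : ℝ) * (η ^ 3 * B)) ^ 2) := Real.sqrt_le_sqrt hsum
            _ = (2 * d : ℝ) * (η ^ 3 * B) := Real.sqrt_sq (by positivity)
        refine hfrob.trans ?_
        have hKB : (2 * d : ℝ) * B ≤ K v x := by
          simp only [hK, hBdef]
          have hd : (2 * d : ℝ) ≤ 2 * ((d:ℝ) + 1) := by push_cast; linarith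
          have hBB : 2 * ‖v‖ * (μ * ‖v‖ + 1 + M) + 2 * μ ^ 2 * ‖v‖ ^ 2 + 2 * M + 1
              ≤ 2 * ‖v‖ * (μ * ‖v‖ + 1 + κ₁ * (1 + ‖x‖ ^ (2 * κ₂)))
                + 2 * μ ^ 2 * ‖v‖ ^ 2 + 2 * κ₁ * (1 + ‖x‖ ^ (2 * κ₂)) + 1 := by
            nlinarith [norm_nonneg v, hMb, hM0]
          have hB2 : (0:ℝ) ≤ 2 * ‖v‖ * (μ * ‖v‖ + 1 + κ₁ * (1 + ‖x‖ ^ (2 * κ₂)))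
              + 2 * μ ^ 2 * ‖v‖ ^ 2 + 2 * κ₁ * (1 + ‖x‖ ^ (2 * κ₂)) + 1 := by
            have h2 : (0:ℝ) ≤ ‖x‖ ^ (2 * κ₂) := by positivity
            nlinarith [norm_nonneg v, mul_nonneg hμ.le (norm_nonneg v), hκ₁.le,
              mul_nonneg (sq_nonneg μ) (sq_nonneg ‖v‖),
              mul_nonneg hκ₁.le (by linarith : (0:ℝ) ≤ 1 + ‖x‖ ^ (2 * κ₂)),
              mul_nonneg (norm_nonneg v)
                (by nlinarith [mul_nonneg hμ.le (norm_nonneg v),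
                  mul_nonneg hκ₁.le (by linarith : (0:ℝ) ≤ 1 + ‖x‖ ^ (2 * κ₂))] :
                  (0:ℝ) ≤ μ * ‖v‖ + 1 + κ₁ * (1 + ‖x‖ ^ (2 * κ₂)))]
          calc (2 * d : ℝ) * (2 * ‖v‖ * (μ * ‖v‖ + 1 + M) + 2 * μ ^ 2 * ‖v‖ ^ 2
                + 2 * M + 1)
              ≤ (2 * d : ℝ) * (2 * ‖v‖ * (μ * ‖v‖ + 1 + κ₁ * (1 + ‖x‖ ^ (2 * κ₂)))
                + 2 * μ ^ 2 * ‖v‖ ^ 2 + 2 * κ₁ * (1 + ‖x‖ ^ (2 * κ₂)) + 1) :=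
                mul_le_mul_of_nonneg_left hBB (by positivity)
            _ ≤ 2 * ((d:ℝ) + 1) * (2 * ‖v‖ * (μ * ‖v‖ + 1 + κ₁ * (1 + ‖x‖ ^ (2 * κ₂)))
                + 2 * μ ^ 2 * ‖v‖ ^ 2 + 2 * κ₁ * (1 + ‖x‖ ^ (2 * κ₂)) + 1) :=
                mul_le_mul_of_nonneg_right hd hB2
        calc (2 * d : ℝ) * (η ^ 3 * B) = ((2 * d : ℝ) * B) * η ^ 3 := by ring
          _ ≤ K v x * η ^ 3 := mul_le_mul_of_nonneg_right hKB (by positivity)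
end

section
/- Let γ be a Γ-valued random variable and (r, x) ↦ f_r(x) a measurable map from Γ × ℝ^d to ℝ such that f_γ(x) is integrable for each x, f_γ is almost surely continuously differentiable in x, ∇f_γ satisfies |∇f_γ(x) − ∇f_γ(y)| ≤ L_γ |x − y| almost surely for all x, y with E L_γ² < ∞, and f(x) := E f_γ(x) is twice continuously differentiable with ∇f(x) = E ∇f_γ(x) and with ∇²f Lipschitz. For η ∈ (0,1) and μ > 0 define the one-step stochastic Nesterov update from (v, x) ∈ ℝ^d × ℝ^d by v₁ := v − μηv − η∇f_γ(x + η(1 − μη)v), x₁ := x + ηv₁, and set Δ := (v₁ − v, x₁ − x) ∈ ℝ^{2d}. Then there exists a function K of polynomial growth in (v, x), independent of η ∈ (0,1), such that | E Δ − η(−μv − ∇f(x), v) − η²(−∇²f(x)v, −μv − ∇f(x)) | ≤ K(v, x) η³. -/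
open MeasureTheory InnerProductSpace Filter Topology


/-- Taylor-type bound for a function with Lipschitz derivative. -/
lemma taylor_fderiv_bound {E G : Type*} [NormedAddCommGroup E] [NormedSpace ℝ E]
    [NormedAddCommGroup G] [NormedSpace ℝ G]
    (g : E → G) (hg : Differentiable ℝ g) (L : ℝ) (hL0 : 0 ≤ L)
    (hL : ∀ z w, ‖fderiv ℝ g z - fderiv ℝ g w‖ ≤ L * ‖z - w‖) (y u : E) :
    ‖g (y + u) - g y - fderiv ℝ g y u‖ ≤ L * ‖u‖ * ‖u‖ := by
  set φ : E → G := fun z => g z - fderiv ℝ g y z with hφ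
  have hφdiff : ∀ z, DifferentiableAt ℝ φ z := fun z =>
    (hg z).sub ((fderiv ℝ g y).differentiableAt)
  have hφderiv : ∀ z, fderiv ℝ φ z = fderiv ℝ g z - fderiv ℝ g y := by
    intro z
    rw [hφ, fderiv_fun_sub (hg z) (fderiv ℝ g y).differentiableAt,
      ContinuousLinearMap.fderiv]
  have key := Convex.norm_image_sub_le_of_norm_fderiv_le
    (f := φ) (s := Metric.closedBall y ‖u‖) (C := L * ‖u‖) (x := y) (y := y + u)
    (fun z _ => hφdiff z)
    (by
      intro z hz
      rw [hφderiv z]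
      calc ‖fderiv ℝ g z - fderiv ℝ g y‖ ≤ L * ‖z - y‖ := hL z y
        _ ≤ L * ‖u‖ := by
            have hz' : ‖z - y‖ ≤ ‖u‖ := by simpa [dist_eq_norm] using hz
            exact mul_le_mul_of_nonneg_left hz' hL0)
    (convex_closedBall _ _)
    (Metric.mem_closedBall_self (norm_nonneg u))
    (by simp [Metric.mem_closedBall, dist_eq_norm])
  have hid : φ (y + u) - φ y = g (y + u) - g y - fderiv ℝ g y u := by
    simp only [hφ, map_add]
    abel
  rw [hid] at key
  calc ‖g (y + u) - g y - fderiv ℝ g y u‖ ≤ L * ‖u‖ * ‖y + u - y‖ := key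
    _ = L * ‖u‖ * ‖u‖ := by simp

lemma gradient_sub_eq {E : Type*} [NormedAddCommGroup E] [InnerProductSpace ℝ E]
    [CompleteSpace E] (f : E → ℝ) (z w : E) :
    ‖fderiv ℝ f z - fderiv ℝ f w‖ = ‖gradient f z - gradient f w‖ := by
  have h : gradient f z - gradient f w
      = (toDual ℝ E).symm (fderiv ℝ f z - fderiv ℝ f w) := by
    rw [map_sub]; rfl
  rw [h, LinearIsometryEquiv.norm_map]

lemma taylor_gradient_bound {E : Type*} [NormedAddCommGroup E] [InnerProductSpace ℝ E]
    [CompleteSpace E] (f : E → ℝ) (hf : ContDiff ℝ 1 f) (L : ℝ) (hL0 : 0 ≤ L)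
    (hL : ∀ z w, ‖gradient f z - gradient f w‖ ≤ L * ‖z - w‖) (y u : E) :
    |f (y + u) - f y - fderiv ℝ f y u| ≤ L * ‖u‖ * ‖u‖ := by
  have := taylor_fderiv_bound f (hf.differentiable one_ne_zero) L hL0
    (fun z w => by rw [gradient_sub_eq]; exact hL z w) y u
  simpa [Real.norm_eq_abs] using this

lemma inner_gradient_eq {E : Type*} [NormedAddCommGroup E] [InnerProductSpace ℝ E]
    [CompleteSpace E] (f : E → ℝ) (y u : E) :
    @inner ℝ _ _ u (gradient f y) = fderiv ℝ f y u := by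
  rw [real_inner_comm]
  exact InnerProductSpace.toDual_symm_apply


lemma gradient_family_integrable {d : ℕ} {Ω : Type*} [MeasurableSpace Ω] (P : Measure Ω)
    [IsProbabilityMeasure P] {Γ : Type*} [MeasurableSpace Γ] (γ : Ω → Γ) (hγ : Measurable γ)
    (f : Γ → EuclideanSpace ℝ (Fin d) → ℝ)
    (hfmeas : Measurable (Function.uncurry f))
    (hfint : ∀ x, Integrable (fun ω => f (γ ω) x) P)
    (hfC1 : ∀ᵐ ω ∂P, ContDiff ℝ 1 (f (γ ω)))
    (L' : Ω → ℝ) (hL'meas : Measurable L') (hL'0 : ∀ ω, 0 ≤ L' ω)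
    (hLip : ∀ᵐ ω ∂P, ∀ x y, ‖gradient (f (γ ω)) x - gradient (f (γ ω)) y‖ ≤ L' ω * ‖x - y‖)
    (hL'int : Integrable L' P) (y : EuclideanSpace ℝ (Fin d)) :
    Integrable (fun ω => gradient (f (γ ω)) y) P := by
  set b := EuclideanSpace.basisFun (Fin d) ℝ with hb
  have hbnorm : ∀ i, ‖b i‖ = 1 := fun i => b.orthonormal.1 i
  have hmeas_pt : ∀ p : EuclideanSpace ℝ (Fin d), Measurable (fun ω => f (γ ω) p) :=
    fun p => hfmeas.comp (hγ.prodMk measurable_const)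
  set g : Ω → EuclideanSpace ℝ (Fin d) := fun ω => gradient (f (γ ω)) y with hg
  -- measurability via difference quotients
  set φ : ℕ → Ω → EuclideanSpace ℝ (Fin d) := fun n ω =>
    ∑ i, ((n : ℝ) • (f (γ ω) (y + ((n : ℝ))⁻¹ • b i) - f (γ ω) y)) • b i with hφ
  have hφmeas : ∀ n, AEMeasurable (φ n) P := by
    intro n
    refine (Finset.measurable_sum Finset.univ fun i _ => ?_).aemeasurable
    exact (((measurable_const : Measurable fun _ : Ω => (n : ℝ)).smul ((hmeas_pt _).sub (hmeas_pt y)))).smul_const (b i)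
  have htend : ∀ᵐ ω ∂P, Tendsto (fun n => φ n ω) atTop (𝓝 (g ω)) := by
    filter_upwards [hfC1] with ω hC1
    have hd : HasFDerivAt (f (γ ω)) (fderiv ℝ (f (γ ω)) y) y :=
      ((hC1.differentiable one_ne_zero) y).hasFDerivAt
    have hnorm : Tendsto (fun n : ℕ => ‖(n : ℝ)‖) atTop atTop :=
      tendsto_natCast_atTop_atTop.congr fun n => (Real.norm_natCast n).symm
    have hlim : ∀ i, Tendsto (fun n : ℕ => (n : ℝ) • (f (γ ω) (y + ((n : ℝ))⁻¹ • b i)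
        - f (γ ω) y)) atTop (𝓝 (fderiv ℝ (f (γ ω)) y (b i))) :=
      fun i => hd.lim (b i) hnorm
    have hsum : Tendsto (fun n => φ n ω) atTop
        (𝓝 (∑ i, (fderiv ℝ (f (γ ω)) y (b i)) • b i)) :=
      tendsto_finset_sum _ fun i _ => (hlim i).smul_const (b i)
    have hrepr : ∑ i, (fderiv ℝ (f (γ ω)) y (b i)) • b i = g ω := by
      have h1 : ∀ i ∈ Finset.univ, (fderiv ℝ (f (γ ω)) y (b i)) • b i
          = (@inner ℝ _ _ (b i) (g ω)) • b i := fun i _ => by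
        rw [inner_gradient_eq]
      rw [Finset.sum_congr rfl h1, b.sum_repr']
    rwa [hrepr] at hsum
  have hgmeas : AEStronglyMeasurable g P :=
    (aemeasurable_of_tendsto_metrizable_ae atTop hφmeas htend).aestronglyMeasurable
  -- bound
  set B : Ω → ℝ := fun ω => ∑ i : Fin d, (|f (γ ω) (y + b i)| + |f (γ ω) y| + L' ω) with hB
  have hBint : Integrable B P :=
    integrable_finset_sum _ fun i _ => ((hfint _).abs.add (hfint y).abs).add hL'int
  have hbound : ∀ᵐ ω ∂P, ‖g ω‖ ≤ B ω := by
    filter_upwards [hfC1, hLip] with ω hC1 hLipω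
    have htay : ∀ i, |fderiv ℝ (f (γ ω)) y (b i)|
        ≤ |f (γ ω) (y + b i)| + |f (γ ω) y| + L' ω := by
      intro i
      have h1 := taylor_gradient_bound (f (γ ω)) hC1 (L' ω) (hL'0 ω) hLipω y (b i)
      rw [hbnorm i] at h1
      have h2 : |f (γ ω) (y + b i) - f (γ ω) y| ≤ |f (γ ω) (y + b i)| + |f (γ ω) y| :=
        abs_sub _ _
      have h3 : |fderiv ℝ (f (γ ω)) y (b i)|
          ≤ |f (γ ω) (y + b i) - f (γ ω) y - fderiv ℝ (f (γ ω)) y (b i)|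
            + |f (γ ω) (y + b i) - f (γ ω) y| := by
        have := abs_add_le (f (γ ω) (y + b i) - f (γ ω) y - fderiv ℝ (f (γ ω)) y (b i))
          (-(f (γ ω) (y + b i) - f (γ ω) y))
        rw [abs_neg] at this
        calc |fderiv ℝ (f (γ ω)) y (b i)|
            = |-(f (γ ω) (y + b i) - f (γ ω) y - fderiv ℝ (f (γ ω)) y (b i))
              + (f (γ ω) (y + b i) - f (γ ω) y)| := by ring_nf
          _ ≤ _ := by
              rw [← abs_neg (f (γ ω) (y + b i) - f (γ ω) y - fderiv ℝ (f (γ ω)) y (b i))]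
                    at h1 ⊢
              exact abs_add_le _ _
      nlinarith [h1, h2, h3]
    have hnormle : ‖g ω‖ ≤ ∑ i, |fderiv ℝ (f (γ ω)) y (b i)| := by
      conv_lhs => rw [← b.sum_repr' (g ω)]
      refine (norm_sum_le _ _).trans ?_
      refine Finset.sum_le_sum fun i _ => ?_
      rw [norm_smul, hbnorm i, mul_one, Real.norm_eq_abs, inner_gradient_eq]
    refine hnormle.trans ?_
    exact Finset.sum_le_sum fun i _ => htay i
  exact Integrable.mono' hBint hgmeas hbound

set_option maxHeartbeats 2000000 in
/-- First-moment expansion for the one-step stochastic Nesterov accelerated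
gradient increment `Δ = (v₁ − v, x₁ − x)` with `v₁ = v − μηv − η∇f_γ(x + η(1−μη)v)`,
`x₁ = x + ηv₁`: there is a polynomial-growth function `K(v, x)`, independent of `η ∈ (0,1)`,
with `|E Δ − η(−μv − ∇f(x), v) − η²(−∇²f(x)v, −μv − ∇f(x))| ≤ K(v,x) η³`. -/
theorem snag_one_step_first_moment_expansion
    {d : ℕ} {Ω : Type*} [MeasurableSpace Ω] (P : Measure Ω) [IsProbabilityMeasure P]
    {Γ : Type*} [MeasurableSpace Γ] (γ : Ω → Γ) (hγ : Measurable γ)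
    (f : Γ → EuclideanSpace ℝ (Fin d) → ℝ)
    (hfmeas : Measurable (Function.uncurry f))
    (hfint : ∀ x, Integrable (fun ω => f (γ ω) x) P)
    (hfC1 : ∀ᵐ ω ∂P, ContDiff ℝ 1 (f (γ ω)))
    (Lγ : Ω → ℝ) (hLγmeas : Measurable Lγ)
    (hLip : ∀ᵐ ω ∂P, ∀ x y, ‖gradient (f (γ ω)) x - gradient (f (γ ω)) y‖ ≤ Lγ ω * ‖x - y‖)
    (hLγ2 : Integrable (fun ω => (Lγ ω) ^ 2) P)
    (F : EuclideanSpace ℝ (Fin d) → ℝ)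
    (hF : ∀ x, F x = ∫ ω, f (γ ω) x ∂P)
    (hFC2 : ContDiff ℝ 2 F)
    (hFgrad : ∀ x, gradient F x = ∫ ω, gradient (f (γ ω)) x ∂P)
    (hHessLip : ∃ Lh : ℝ, 0 ≤ Lh ∧ ∀ x y,
      ‖fderiv ℝ (gradient F) x - fderiv ℝ (gradient F) y‖ ≤ Lh * ‖x - y‖)
    (μ : ℝ) (hμ : 0 < μ)
    (Δv Δx : ℝ → EuclideanSpace ℝ (Fin d) → EuclideanSpace ℝ (Fin d) → Ω →
      EuclideanSpace ℝ (Fin d))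
    (hΔv : ∀ η v x ω, Δv η v x ω =
      -((μ * η) • v) - η • gradient (f (γ ω)) (x + (η * (1 - μ * η)) • v))
    (hΔx : ∀ η v x ω, Δx η v x ω = η • (v + Δv η v x ω)) :
    ∃ K : EuclideanSpace ℝ (Fin d) → EuclideanSpace ℝ (Fin d) → ℝ,
      (∃ c₁ : ℝ, ∃ c₂ : ℕ, 0 < c₁ ∧ 0 < c₂ ∧
        ∀ v x, |K v x| ≤ c₁ * (1 + (‖v‖ ^ 2 + ‖x‖ ^ 2) ^ c₂)) ∧
      ∀ η : ℝ, 0 < η → η < 1 → ∀ v x,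
        Real.sqrt
          (‖(∫ ω, Δv η v x ω ∂P) - η • (-(μ • v) - gradient F x)
              - (η ^ 2) • (-(fderiv ℝ (gradient F) x v))‖ ^ 2 +
           ‖(∫ ω, Δx η v x ω ∂P) - η • v - (η ^ 2) • (-(μ • v) - gradient F x)‖ ^ 2)
          ≤ K v x * η ^ 3 := by
  classical
  obtain ⟨Lh, hLh0, hLh⟩ := hHessLip
  -- a nonnegative Lipschitz constant for the family of gradients
  have habs : ∀ᵐ ω ∂P, ∀ a b, ‖gradient (f (γ ω)) a - gradient (f (γ ω)) b‖
      ≤ |Lγ ω| * ‖a - b‖ := by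
    filter_upwards [hLip] with ω h a b
    exact (h a b).trans (mul_le_mul_of_nonneg_right (le_abs_self _) (norm_nonneg _))
  have hL'int : Integrable (fun ω => |Lγ ω|) P := by
    refine Integrable.mono' ((integrable_const 1).add hLγ2)
      hLγmeas.abs.aestronglyMeasurable ?_
    refine Filter.Eventually.of_forall fun ω => ?_
    rw [Real.norm_eq_abs, abs_abs]
    simp only [Pi.add_apply]
    nlinarith [sq_nonneg (|Lγ ω| - 1), sq_abs (Lγ ω)]
  have key : ∀ y, Integrable (fun ω => gradient (f (γ ω)) y) P := fun y =>
    gradient_family_integrable P γ hγ f hfmeas hfint hfC1 _ hLγmeas.abs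
      (fun ω => abs_nonneg _) habs hL'int y
  -- differentiability of the gradient of F
  have hGdiff : Differentiable ℝ (gradient F) := by
    have h1 : ContDiff ℝ 1 (fun z => fderiv ℝ F z) := hFC2.fderiv_right (by norm_num)
    have h2 : gradient F
        = fun z => (toDual ℝ (EuclideanSpace ℝ (Fin d))).symm (fderiv ℝ F z) := rfl
    rw [h2]
    exact ((toDual ℝ _).symm.contDiff.differentiable one_ne_zero).comp (h1.differentiable one_ne_zero)
  set H := fderiv ℝ (gradient F) with hHdef
  have hTayG : ∀ x u, ‖gradient F (x + u) - gradient F x - H x u‖ ≤ Lh * ‖u‖ * ‖u‖ :=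
    fun x u => taylor_fderiv_bound (gradient F) hGdiff Lh hLh0 hLh x u
  have hHxnorm : ∀ x, ‖H x‖ ≤ ‖H 0‖ + Lh * ‖x‖ := by
    intro x
    have h1 := hLh x 0
    rw [sub_zero] at h1
    have h2 := norm_sub_norm_le (H x) (H 0)
    linarith
  refine ⟨fun v x => 2 * (Lh * (1 + μ) ^ 2 * ‖v‖ ^ 2)
      + (2 * μ + 1) * ((‖H 0‖ + Lh * ‖x‖) * ‖v‖), ?_, ?_⟩
  · -- polynomial growth
    refine ⟨2 * (Lh * (1 + μ) ^ 2) + (2 * μ + 1) * (‖H 0‖ + Lh) + 1, 1,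
      by positivity, one_pos, ?_⟩
    intro v x
    show |2 * (Lh * (1 + μ) ^ 2 * ‖v‖ ^ 2) + (2 * μ + 1) * ((‖H 0‖ + Lh * ‖x‖) * ‖v‖)|
      ≤ (2 * (Lh * (1 + μ) ^ 2) + (2 * μ + 1) * (‖H 0‖ + Lh) + 1)
        * (1 + (‖v‖ ^ 2 + ‖x‖ ^ 2) ^ 1)
    have h0 : (0:ℝ) ≤ ‖H 0‖ := norm_nonneg _
    have hv : (0:ℝ) ≤ ‖v‖ := norm_nonneg v
    have hx : (0:ℝ) ≤ ‖x‖ := norm_nonneg x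
    rw [abs_of_nonneg (by positivity), pow_one]
    have ha : ‖v‖ ≤ 1 + (‖v‖ ^ 2 + ‖x‖ ^ 2) := by nlinarith [sq_nonneg (‖v‖ - 1)]
    have hab : ‖x‖ * ‖v‖ ≤ 1 + (‖v‖ ^ 2 + ‖x‖ ^ 2) := by
      nlinarith [sq_nonneg (‖v‖ - ‖x‖)]
    have ha2 : ‖v‖ ^ 2 ≤ 1 + (‖v‖ ^ 2 + ‖x‖ ^ 2) := by nlinarith
    have t1 : 2 * (Lh * (1 + μ) ^ 2) * ‖v‖ ^ 2
        ≤ 2 * (Lh * (1 + μ) ^ 2) * (1 + (‖v‖ ^ 2 + ‖x‖ ^ 2)) :=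
      mul_le_mul_of_nonneg_left ha2 (by positivity)
    have t2 : ‖H 0‖ * ‖v‖ ≤ ‖H 0‖ * (1 + (‖v‖ ^ 2 + ‖x‖ ^ 2)) :=
      mul_le_mul_of_nonneg_left ha h0
    have t3 : Lh * (‖x‖ * ‖v‖) ≤ Lh * (1 + (‖v‖ ^ 2 + ‖x‖ ^ 2)) :=
      mul_le_mul_of_nonneg_left hab hLh0
    nlinarith [mul_le_mul_of_nonneg_left (add_le_add t2 t3) (by positivity : (0:ℝ) ≤ 2 * μ + 1)]
  · -- main estimate
    intro η hη0 hη1 v x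
    set y₀ := x + (η * (1 - μ * η)) • v with hy₀
    have hgint : Integrable (fun ω => gradient (f (γ ω)) y₀) P := key y₀
    have hgint' : Integrable (fun ω => η • gradient (f (γ ω)) y₀) P := hgint.smul η
    have hΔvint : Integrable (fun ω => Δv η v x ω) P := by
      simp only [hΔv]
      exact (integrable_const _).sub hgint'
    have hIv : (∫ ω, Δv η v x ω ∂P) = -((μ * η) • v) - η • gradient F y₀ := by
      simp only [hΔv]
      rw [integral_sub (integrable_const _) hgint', integral_smul, integral_const,
        ← hFgrad]
      simp [measure_univ]
    have hIx : (∫ ω, Δx η v x ω ∂P) = η • (v + (∫ ω, Δv η v x ω ∂P)) := by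
      simp only [hΔx]
      rw [integral_smul, integral_add (integrable_const v) hΔvint, integral_const]
      simp [measure_univ]
    have hw : H x ((η * (1 - μ * η)) • v) = (η * (1 - μ * η)) • H x v :=
      (H x).map_smul _ _
    have hT1 : (∫ ω, Δv η v x ω ∂P) - η • (-(μ • v) - gradient F x)
          - (η ^ 2) • (-(H x v))
        = -(η • (gradient F y₀ - gradient F x - H x ((η * (1 - μ * η)) • v)))
          + (μ * η ^ 3) • H x v := by
      rw [hIv, hw]
      module
    have hT2 : (∫ ω, Δx η v x ω ∂P) - η • v - (η ^ 2) • (-(μ • v) - gradient F x)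
        = η • ((∫ ω, Δv η v x ω ∂P) - η • (-(μ • v) - gradient F x)
            - (η ^ 2) • (-(H x v))) - (η ^ 3) • H x v := by
      rw [hIx, hIv]
      module
    -- norm bounds
    have hu : ‖(η * (1 - μ * η)) • v‖ ≤ ((1 + μ) * η) * ‖v‖ := by
      rw [norm_smul, Real.norm_eq_abs]
      have habs1 : |η * (1 - μ * η)| ≤ (1 + μ) * η := by
        rw [abs_mul, abs_of_pos hη0]
        have h2 : |1 - μ * η| ≤ 1 + μ := by
          rw [abs_le]
          constructor <;> nlinarith
        nlinarith
      exact mul_le_mul_of_nonneg_right habs1 (norm_nonneg v)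
    have hRb : ‖gradient F y₀ - gradient F x - H x ((η * (1 - μ * η)) • v)‖
        ≤ Lh * ((1 + μ) ^ 2 * ‖v‖ ^ 2) * η ^ 2 := by
      have h1 := hTayG x ((η * (1 - μ * η)) • v)
      rw [← hy₀] at h1
      have hun : (0:ℝ) ≤ ‖(η * (1 - μ * η)) • v‖ := norm_nonneg _
      have h2 : ‖(η * (1 - μ * η)) • v‖ * ‖(η * (1 - μ * η)) • v‖
          ≤ (((1 + μ) * η) * ‖v‖) * (((1 + μ) * η) * ‖v‖) :=
        mul_le_mul hu hu hun (by positivity)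
      calc ‖gradient F y₀ - gradient F x - H x ((η * (1 - μ * η)) • v)‖
          ≤ Lh * ‖(η * (1 - μ * η)) • v‖ * ‖(η * (1 - μ * η)) • v‖ := h1
        _ = Lh * (‖(η * (1 - μ * η)) • v‖ * ‖(η * (1 - μ * η)) • v‖) := by ring
        _ ≤ Lh * ((((1 + μ) * η) * ‖v‖) * (((1 + μ) * η) * ‖v‖)) :=
            mul_le_mul_of_nonneg_left h2 hLh0
        _ = Lh * ((1 + μ) ^ 2 * ‖v‖ ^ 2) * η ^ 2 := by ring
    have hHx : ‖H x v‖ ≤ (‖H 0‖ + Lh * ‖x‖) * ‖v‖ :=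
      le_trans ((H x).le_opNorm v)
        (mul_le_mul_of_nonneg_right (hHxnorm x) (norm_nonneg v))
    have hHx0 : (0:ℝ) ≤ (‖H 0‖ + Lh * ‖x‖) * ‖v‖ := by positivity
    have hT1n : ‖(∫ ω, Δv η v x ω ∂P) - η • (-(μ • v) - gradient F x)
          - (η ^ 2) • (-(H x v))‖
        ≤ (Lh * ((1 + μ) ^ 2 * ‖v‖ ^ 2) + μ * ((‖H 0‖ + Lh * ‖x‖) * ‖v‖)) * η ^ 3 := by
      rw [hT1]
      refine (norm_add_le _ _).trans ?_
      rw [norm_neg, norm_smul, norm_smul, Real.norm_eq_abs, Real.norm_eq_abs,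
        abs_of_pos hη0, abs_of_pos (by positivity : (0:ℝ) < μ * η ^ 3)]
      have hb1 : η * ‖gradient F y₀ - gradient F x - H x ((η * (1 - μ * η)) • v)‖
          ≤ η * (Lh * ((1 + μ) ^ 2 * ‖v‖ ^ 2) * η ^ 2) :=
        mul_le_mul_of_nonneg_left hRb hη0.le
      have hb2 : μ * η ^ 3 * ‖H x v‖ ≤ μ * η ^ 3 * ((‖H 0‖ + Lh * ‖x‖) * ‖v‖) :=
        mul_le_mul_of_nonneg_left hHx (by positivity)
      nlinarith
    have hT2n : ‖(∫ ω, Δx η v x ω ∂P) - η • v - (η ^ 2) • (-(μ • v) - gradient F x)‖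
        ≤ (Lh * ((1 + μ) ^ 2 * ‖v‖ ^ 2) + μ * ((‖H 0‖ + Lh * ‖x‖) * ‖v‖)
            + (‖H 0‖ + Lh * ‖x‖) * ‖v‖) * η ^ 3 := by
      rw [hT2]
      refine (norm_sub_le _ _).trans ?_
      rw [norm_smul, norm_smul, Real.norm_eq_abs, Real.norm_eq_abs,
        abs_of_pos hη0, abs_of_pos (by positivity : (0:ℝ) < η ^ 3)]
      have hb1 : η * ‖(∫ ω, Δv η v x ω ∂P) - η • (-(μ • v) - gradient F x)
            - (η ^ 2) • (-(H x v))‖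
          ≤ η * ((Lh * ((1 + μ) ^ 2 * ‖v‖ ^ 2) + μ * ((‖H 0‖ + Lh * ‖x‖) * ‖v‖)) * η ^ 3) :=
        mul_le_mul_of_nonneg_left hT1n hη0.le
      have hb2 : η ^ 3 * ‖H x v‖ ≤ η ^ 3 * ((‖H 0‖ + Lh * ‖x‖) * ‖v‖) :=
        mul_le_mul_of_nonneg_left hHx (by positivity)
      have hC0 : (0:ℝ) ≤ Lh * ((1 + μ) ^ 2 * ‖v‖ ^ 2) + μ * ((‖H 0‖ + Lh * ‖x‖) * ‖v‖) := by
        positivity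
      nlinarith [mul_le_mul_of_nonneg_left
        (pow_le_pow_of_le_one hη0.le hη1.le (by norm_num : 3 ≤ 4)) hC0]
    have hsqrt : ∀ a b : ℝ, 0 ≤ a → 0 ≤ b → Real.sqrt (a ^ 2 + b ^ 2) ≤ a + b := by
      intro a b ha hb
      have h := Real.sqrt_le_sqrt (show a ^ 2 + b ^ 2 ≤ (a + b) ^ 2 by nlinarith)
      rwa [Real.sqrt_sq (by positivity)] at h
    refine le_trans (hsqrt _ _ (norm_nonneg _) (norm_nonneg _)) ?_
    show _ ≤ (2 * (Lh * (1 + μ) ^ 2 * ‖v‖ ^ 2)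
      + (2 * μ + 1) * ((‖H 0‖ + Lh * ‖x‖) * ‖v‖)) * η ^ 3
    nlinarith [hT1n, hT2n]
end

section
/- Let H be a real symmetric positive-definite d×d matrix and μ ∈ ℝ. Let A be the real 2d×2d block matrix A = [ (μI, H) ; (−I, 0) ]. Then the set of complex eigenvalues of A equals { (μ + s·√(μ² − 4κ)) / 2 : κ an eigenvalue of H, s ∈ {+1, −1} }, where √ denotes a complex square root (so that for μ² < 4κ the two values are (μ ± i√(4κ − μ²))/2). -/
open Matrix Polynomial


-- eval of charpoly
lemma myEvalCharpoly {n : Type*} [DecidableEq n] [Fintype n] {R : Type*} [CommRing R]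
    (M : Matrix n n R) (z : R) : M.charpoly.eval z = (z • (1 : Matrix n n R) - M).det := by
  rw [Matrix.charpoly, ← Polynomial.coe_evalRingHom, RingHom.map_det]
  congr 1
  ext i j
  by_cases h : i = j <;>
    simp [h, Matrix.charmatrix_apply, Matrix.one_apply, Matrix.smul_apply, Matrix.sub_apply]

-- block determinant vanishing
lemma myBlockDet {d : ℕ} {R : Type*} [CommRing R] [IsDomain R] (A B D : Matrix (Fin d) (Fin d) R) :
    (Matrix.fromBlocks A B (1 : Matrix (Fin d) (Fin d) R) D).det = 0 ↔ (A * D - B).det = 0 := by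
  set J : Matrix (Fin d ⊕ Fin d) (Fin d ⊕ Fin d) R := Matrix.fromBlocks 0 1 1 0 with hJdef
  have hJ2 : J * J = 1 := by
    simp [hJdef, Matrix.fromBlocks_multiply, ← Matrix.fromBlocks_one]
  have hJ : J.det * J.det = 1 := by rw [← Matrix.det_mul, hJ2, Matrix.det_one]
  have hE : (Matrix.fromBlocks (1 : Matrix (Fin d) (Fin d) R) (-A) 0 1).det = 1 := by
    rw [Matrix.det_fromBlocks_zero₂₁]; simp
  have hF : (Matrix.fromBlocks (1 : Matrix (Fin d) (Fin d) R) (-D) 0 1).det = 1 := by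
    rw [Matrix.det_fromBlocks_zero₂₁]; simp
  have key : (Matrix.fromBlocks A B 1 D).det * J.det = (B - A * D).det := by
    calc (Matrix.fromBlocks A B 1 D).det * J.det
        = (Matrix.fromBlocks (1 : Matrix (Fin d) (Fin d) R) (-A) 0 1).det *
          (Matrix.fromBlocks A B 1 D).det *
          (Matrix.fromBlocks (1 : Matrix (Fin d) (Fin d) R) (-D) 0 1).det * J.det := by
          rw [hE, hF]; ring
      _ = ((Matrix.fromBlocks (1 : Matrix (Fin d) (Fin d) R) (-A) 0 1 *
            Matrix.fromBlocks A B 1 D *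
            Matrix.fromBlocks (1 : Matrix (Fin d) (Fin d) R) (-D) 0 1) * J).det := by
          rw [Matrix.det_mul, Matrix.det_mul, Matrix.det_mul]
      _ = (Matrix.fromBlocks (B - A * D) 0 0 (1 : Matrix (Fin d) (Fin d) R)).det := by
          congr 1
          simp only [hJdef, Matrix.fromBlocks_multiply, Matrix.one_mul, Matrix.mul_one,
            Matrix.mul_zero, Matrix.zero_mul, Matrix.mul_neg, Matrix.neg_mul,
            add_zero, zero_add, neg_add_cancel, add_neg_cancel, mul_zero,
            zero_mul, one_mul, mul_one]
          congr 1 <;> noncomm_ring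
      _ = (B - A * D).det := by rw [Matrix.det_fromBlocks_zero₂₁]; simp
  constructor
  · intro h
    have : (B - A * D).det = 0 := by rw [← key, h, zero_mul]
    rw [show A * D - B = -(B - A*D) from (neg_sub _ _).symm, Matrix.det_neg, this, mul_zero]
  · intro h
    have h2 : (B - A * D).det = 0 := by
      rw [show B - A*D = -(A * D - B) from (neg_sub _ _).symm, Matrix.det_neg, h, mul_zero]
    rw [← key] at h2
    rcases mul_eq_zero.mp h2 with h3 | h3
    · exact h3
    · exfalso; rw [h3, mul_zero] at hJ; exact zero_ne_one hJ

lemma myDetShift {d : ℕ} (H : Matrix (Fin d) (Fin d) ℝ) (hH : H.IsHermitian) (c : ℂ) :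
    ((H.map (algebraMap ℝ ℂ)) + c • (1 : Matrix (Fin d) (Fin d) ℂ)).det =
      ∏ i, ((hH.eigenvalues i : ℂ) + c) := by
  set f := algebraMap ℝ ℂ
  set U : Matrix (Fin d) (Fin d) ℝ := (hH.eigenvectorUnitary : Matrix (Fin d) (Fin d) ℝ)
  have hUV : U * star U = 1 := (Matrix.mem_unitaryGroup_iff).mp hH.eigenvectorUnitary.2
  have hmap : H.map f = U.map f * (Matrix.diagonal (fun i => (hH.eigenvalues i : ℂ))) *
      (star U).map f := by
    conv_lhs => rw [hH.spectral_theorem, Unitary.conjStarAlgAut_apply]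
    rw [Matrix.map_mul, Matrix.map_mul, Matrix.diagonal_map (map_zero f)]
    congr 1
  have hUVc : U.map f * (star U).map f = 1 := by
    rw [← Matrix.map_mul, hUV, Matrix.map_one f (map_zero f) (map_one f)]
  have hdiag : (Matrix.diagonal (fun i => (hH.eigenvalues i : ℂ) + c)) =
      (Matrix.diagonal (fun i => (hH.eigenvalues i : ℂ))) + c • 1 := by
    ext i j
    rcases eq_or_ne i j with h | h <;>
      simp [Matrix.diagonal_apply, h, Matrix.one_apply, Matrix.smul_apply]
  have key : H.map f + c • 1 =
      U.map f * (Matrix.diagonal (fun i => (hH.eigenvalues i : ℂ) + c)) * (star U).map f := by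
    rw [hdiag, Matrix.mul_add, Matrix.add_mul, ← hmap, Matrix.mul_smul, Matrix.smul_mul,
      Matrix.mul_one, hUVc]
  have h1 : (U.map f).det * ((star U).map f).det = 1 := by
    rw [← Matrix.det_mul, hUVc, Matrix.det_one]
  rw [key, Matrix.det_mul, Matrix.det_mul, mul_right_comm, h1, one_mul, Matrix.det_diagonal]

/-- The complex eigenvalues of the block matrix `A = [(μI, H); (−I, 0)]`,
for `H` real symmetric positive definite, are exactly `(μ ± √(μ² − 4κ))/2` as `κ` ranges over
the eigenvalues of `H` (with `√` a complex square root). -/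
theorem msgd_sme_drift_matrix_eigenvalues
    {d : ℕ} (H : Matrix (Fin d) (Fin d) ℝ) (hH : H.PosDef) (μ : ℝ) :
    {z : ℂ | (((Matrix.fromBlocks (μ • (1 : Matrix (Fin d) (Fin d) ℝ)) H
        (-(1 : Matrix (Fin d) (Fin d) ℝ)) 0).map (algebraMap ℝ ℂ)).charpoly).IsRoot z} =
    {z : ℂ | ∃ i : Fin d, ∃ s : ℝ, (s = 1 ∨ s = -1) ∧ ∃ w : ℂ,
      w ^ 2 = (μ : ℂ) ^ 2 - 4 * (hH.isHermitian.eigenvalues i : ℂ) ∧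
      z = ((μ : ℂ) + (s : ℂ) * w) / 2} := by
  set f := algebraMap ℝ ℂ with hf
  set Hc := H.map f with hHc
  have hA : (Matrix.fromBlocks (μ • (1 : Matrix (Fin d) (Fin d) ℝ)) H
      (-(1 : Matrix (Fin d) (Fin d) ℝ)) 0).map f =
      Matrix.fromBlocks ((μ : ℂ) • 1) Hc (-(1 : Matrix (Fin d) (Fin d) ℂ)) 0 := by
    have h1 : (μ • (1 : Matrix (Fin d) (Fin d) ℝ)).map f = (μ : ℂ) • 1 := by
      ext i j
      rcases eq_or_ne i j with h | h <;>
        simp [Matrix.map_apply, Matrix.smul_apply, Matrix.one_apply, h, hf]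
    have h2 : (-(1 : Matrix (Fin d) (Fin d) ℝ)).map f = -1 := by
      ext i j
      rcases eq_or_ne i j with h | h <;>
        simp [Matrix.map_apply, Matrix.one_apply, h, hf]
    have h3 : ((0 : Matrix (Fin d) (Fin d) ℝ)).map f = 0 := by
      ext i j
      simp [Matrix.map_apply, hf]
    rw [Matrix.fromBlocks_map, h1, h2, h3]
  ext z
  simp only [Set.mem_setOf_eq]
  rw [Polynomial.IsRoot, myEvalCharpoly, hA]
  have hsub : z • (1 : Matrix (Fin d ⊕ Fin d) (Fin d ⊕ Fin d) ℂ) -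
      Matrix.fromBlocks ((μ : ℂ) • 1) Hc (-(1 : Matrix (Fin d) (Fin d) ℂ)) 0 =
      Matrix.fromBlocks ((z - (μ : ℂ)) • 1) (-Hc) (1 : Matrix (Fin d) (Fin d) ℂ) (z • 1) := by
    rw [← Matrix.fromBlocks_one, Matrix.fromBlocks_smul]
    ext (i | i) (j | j) <;>
      simp [Matrix.fromBlocks, Matrix.sub_apply, Matrix.smul_apply, sub_smul]
  rw [hsub]
  have hprod : ((z - (μ : ℂ)) • (1 : Matrix (Fin d) (Fin d) ℂ)) * (z • 1) - (-Hc) =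
      Hc + ((z - (μ : ℂ)) * z) • 1 := by
    rw [Matrix.smul_mul, Matrix.mul_smul, Matrix.one_mul, smul_smul, sub_neg_eq_add]
    abel
  rw [myBlockDet, hprod, myDetShift H hH.isHermitian, Finset.prod_eq_zero_iff]
  constructor
  · rintro ⟨i, -, hi⟩
    refine ⟨i, 1, Or.inl rfl, 2 * z - (μ : ℂ), ?_, ?_⟩
    · linear_combination 4 * hi
    · push_cast
      ring
  · rintro ⟨i, s, hs, w, hw, hz⟩
    refine ⟨i, Finset.mem_univ i, ?_⟩
    have hs2 : (s : ℂ) ^ 2 = 1 := by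
      rcases hs with h | h <;> rw [h] <;> norm_num
    subst hz
    linear_combination ((s : ℂ) ^ 2 / 4) * hw + ((μ : ℂ) ^ 2 / 4 - (hH.isHermitian.eigenvalues i : ℂ)) * hs2
end

section
/- Let H be a real symmetric positive-definite d×d matrix and μ > 0. Let A be the real 2d×2d block matrix A = [ (μI, H) ; (−I, 0) ]. Then every complex eigenvalue of A has strictly positive real part. -/
open Matrix Polynomial Complex
open scoped ComplexOrder

lemma aux_eval_charpoly {n : Type*} [Fintype n] [DecidableEq n]
    (M : Matrix n n ℂ) (z : ℂ) :
    M.charpoly.eval z = (Matrix.diagonal (fun _ => z) - M).det := by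
  rw [Matrix.charpoly, ← Polynomial.coe_evalRingHom, RingHom.map_det]
  congr 1
  ext i j
  by_cases h : i = j
  · subst h; simp [charmatrix_apply_eq]
  · simp [charmatrix_apply_ne _ _ _ h, Matrix.diagonal_apply_ne _ h]

lemma aux_posdef_map {d : ℕ} (H : Matrix (Fin d) (Fin d) ℝ) (hH : H.PosDef)
    (y : Fin d → ℂ) (hy : y ≠ 0) :
    (star y ⬝ᵥ (H.map (algebraMap ℝ ℂ)) *ᵥ y).im = 0 ∧
    0 < (star y ⬝ᵥ (H.map (algebraMap ℝ ℂ)) *ᵥ y).re := by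
  classical
  set a : Fin d → ℝ := fun i => (y i).re with ha
  set b : Fin d → ℝ := fun i => (y i).im with hb
  have hs : star y ⬝ᵥ (H.map (algebraMap ℝ ℂ)) *ᵥ y
      = ∑ i, ∑ j, (starRingEnd ℂ (y i)) * ((H i j : ℂ) * y j) := by
    simp [dotProduct, Matrix.mulVec, Finset.mul_sum, Matrix.map_apply,
      Pi.star_apply, RCLike.star_def]
  have hsym : ∀ i j, H i j = H j i := fun i j => by simpa using Matrix.IsHermitian.apply hH.1 j i
  constructor
  · rw [hs]
    have : (∑ i, ∑ j, (starRingEnd ℂ (y i)) * ((H i j : ℂ) * y j)).im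
        = ∑ i, ∑ j, H i j * (a i * b j - b i * a j) := by
      rw [Complex.im_sum]
      refine Finset.sum_congr rfl fun i _ => ?_
      rw [Complex.im_sum]
      refine Finset.sum_congr rfl fun j _ => ?_
      simp [Complex.mul_im, Complex.mul_re, ha, hb]
      ring
    rw [this]
    have h2 : ∑ i, ∑ j, H i j * (a i * b j - b i * a j)
        = -∑ i, ∑ j, H i j * (a i * b j - b i * a j) := by
      conv_lhs => rw [Finset.sum_comm]
      rw [← Finset.sum_neg_distrib]
      refine Finset.sum_congr rfl fun i _ => ?_
      rw [← Finset.sum_neg_distrib]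
      refine Finset.sum_congr rfl fun j _ => ?_
      rw [hsym j i]; ring
    linarith [h2]
  · have hre : (star y ⬝ᵥ (H.map (algebraMap ℝ ℂ)) *ᵥ y).re
        = a ⬝ᵥ H *ᵥ a + b ⬝ᵥ H *ᵥ b := by
      rw [hs, Complex.re_sum]
      rw [dotProduct, dotProduct]
      rw [← Finset.sum_add_distrib]
      refine Finset.sum_congr rfl fun i _ => ?_
      rw [Complex.re_sum]
      simp only [Matrix.mulVec, dotProduct, Finset.mul_sum]
      rw [← Finset.sum_add_distrib]
      refine Finset.sum_congr rfl fun j _ => ?_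
      simp [Complex.mul_im, Complex.mul_re, ha, hb]
      
    rw [hre]
    have hsemi : ∀ v : Fin d → ℝ, 0 ≤ v ⬝ᵥ H *ᵥ v := fun v => by
      simpa using hH.posSemidef.dotProduct_mulVec_nonneg v
    have hpos : ∀ v : Fin d → ℝ, v ≠ 0 → 0 < v ⬝ᵥ H *ᵥ v := fun v hv => by
      simpa using hH.dotProduct_mulVec_pos hv
    rcases eq_or_ne a 0 with h0 | h0
    · have hb0 : b ≠ 0 := by
        intro hb0
        apply hy
        funext i
        have : (y i).re = 0 := congrFun h0 i
        have : (y i).im = 0 := congrFun hb0 i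
        exact Complex.ext (congrFun h0 i) (congrFun hb0 i)
      have := hpos b hb0
      have := hsemi a
      linarith
    · have := hpos a h0
      have := hsemi b
      linarith

/-- For `H` real symmetric positive definite and `μ > 0`, every complex
eigenvalue of the block matrix `A = [(μI, H); (−I, 0)]` has strictly positive real part. -/
theorem msgd_sme_drift_matrix_eigenvalues_pos_re
    {d : ℕ} (H : Matrix (Fin d) (Fin d) ℝ) (hH : H.PosDef) (μ : ℝ) (hμ : 0 < μ) :
    ∀ z : ℂ, (((Matrix.fromBlocks (μ • (1 : Matrix (Fin d) (Fin d) ℝ)) H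
        (-(1 : Matrix (Fin d) (Fin d) ℝ)) 0).map (algebraMap ℝ ℂ)).charpoly).IsRoot z →
      0 < z.re := by
  intro z hz
  classical
  set Ac := ((Matrix.fromBlocks (μ • (1 : Matrix (Fin d) (Fin d) ℝ)) H
      (-(1 : Matrix (Fin d) (Fin d) ℝ)) 0).map (algebraMap ℝ ℂ)) with hAc
  have hdet : (Matrix.diagonal (fun _ => z) - Ac).det = 0 := by
    rw [← aux_eval_charpoly]; exact hz
  obtain ⟨v, hv0, hv⟩ := (Matrix.exists_mulVec_eq_zero_iff).mpr hdet
  have hAv : Ac *ᵥ v = z • v := by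
    have h1 : (Matrix.diagonal (fun _ => z) - Ac) *ᵥ v
        = Matrix.diagonal (fun _ => z) *ᵥ v - Ac *ᵥ v := Matrix.sub_mulVec _ _ _
    rw [hv] at h1
    have h2 : Matrix.diagonal (fun _ => z) *ᵥ v = z • v := by
      funext i; simp [Matrix.mulVec_diagonal]
    rw [h2] at h1
    exact (sub_eq_zero.mp h1.symm).symm
  have hAc' : Ac = Matrix.fromBlocks
      (μ • (1 : Matrix (Fin d) (Fin d) ℂ)) (H.map (algebraMap ℝ ℂ))
      (-(1 : Matrix (Fin d) (Fin d) ℂ)) 0 := by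
    rw [hAc]
    ext i j
    rcases i with i | i <;> rcases j with j | j <;>
      simp [Matrix.one_apply, Matrix.map_apply, apply_ite (algebraMap ℝ ℂ), apply_ite Complex.ofReal]
  set x : Fin d → ℂ := v ∘ Sum.inl with hx
  set y : Fin d → ℂ := v ∘ Sum.inr with hyy
  have hvel : v = Sum.elim x y := by funext i; cases i <;> rfl
  rw [hAc', hvel, Matrix.fromBlocks_mulVec] at hAv
  simp only [Sum.elim_comp_inl, Sum.elim_comp_inr] at hAv
  have heq1 : μ • x + (H.map (algebraMap ℝ ℂ)) *ᵥ y = z • x := by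
    funext i
    have h := congrFun hAv (Sum.inl i)
    simpa [Matrix.smul_mulVec, Matrix.one_mulVec] using h
  have heq2 : -x = z • y := by
    funext i
    have h := congrFun hAv (Sum.inr i)
    simpa [Matrix.neg_mulVec, Matrix.one_mulVec] using h
  have hxy : x = -(z • y) := by rw [← heq2]; ring_nf
  have hy0 : y ≠ 0 := by
    intro h
    apply hv0
    rw [hvel, h]
    have hx0 : x = 0 := by rw [hxy, h, smul_zero, neg_zero]
    rw [hx0]
    funext i; cases i <;> rfl
  have heig : (H.map (algebraMap ℝ ℂ)) *ᵥ y = (z * (↑μ - z)) • y := by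
    funext i
    have h := congrFun heq1 i
    have hxi : x i = -(z * y i) := by
      have := congrFun hxy i; simpa using this
    simp only [Pi.add_apply, Pi.smul_apply, smul_eq_mul, Complex.real_smul] at h ⊢
    rw [hxi] at h
    linear_combination h
  set c : ℂ := star y ⬝ᵥ y with hc
  set s : ℂ := star y ⬝ᵥ (H.map (algebraMap ℝ ℂ)) *ᵥ y with hs
  have hsc : s = (z * (↑μ - z)) * c := by
    rw [hs, heig, dotProduct_smul, hc, smul_eq_mul]
  have hcpos : 0 < c.re ∧ c.im = 0 := by
    have h := Matrix.dotProduct_star_self_pos_iff (R := ℂ) (v := y) |>.mpr hy0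
    rw [← hc, Complex.lt_def] at h
    simpa using ⟨h.1, h.2.symm⟩
  obtain ⟨him, hre⟩ := aux_posdef_map H hH y hy0
  set l : ℂ := z * (↑μ - z) with hl
  have hlim : l.im = 0 := by
    have h : s.im = l.im * c.re + l.re * c.im := by
      rw [hsc, Complex.mul_im]; ring
    rw [him, hcpos.2] at h
    simp only [mul_zero, add_zero] at h
    exact (mul_eq_zero.mp h.symm).resolve_right (ne_of_gt hcpos.1)
  have hlre : 0 < l.re := by
    have h : s.re = l.re * c.re - l.im * c.im := by
      rw [hsc, Complex.mul_re]
    rw [hlim, hcpos.2] at h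
    simp only [mul_zero, zero_mul, sub_zero] at h
    rw [h] at hre
    nlinarith [hcpos.1]
  have e1 : l.re = z.re * μ - z.re ^ 2 + z.im ^ 2 := by
    rw [hl, Complex.mul_re]
    simp [Complex.sub_re, Complex.sub_im]
    ring
  have e2 : l.im = z.im * μ - 2 * z.re * z.im := by
    rw [hl, Complex.mul_im]
    simp [Complex.sub_re, Complex.sub_im]
    ring
  rw [e1] at hlre
  rw [e2] at hlim
  by_contra hcon
  push_neg at hcon
  have hb : z.im = 0 := by
    have hmul : z.im * (μ - 2 * z.re) = 0 := by linear_combination hlim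
    rcases mul_eq_zero.mp hmul with h | h
    · exact h
    · nlinarith
  rw [hb] at hlre
  nlinarith
end

section
/- Let H be a real symmetric positive-definite d×d matrix and let λ_min > 0 be its smallest eigenvalue. For μ > 0 define g(μ) := min over the eigenvalues κ of H of the minimum of Re z over the two complex roots z of the quadratic z² − μz + κ = 0. Then g(μ) ≤ √λ_min for every μ > 0, and g(μ) = √λ_min if and only if μ = 2√λ_min. In particular, sup_{μ>0} g(μ) is attained uniquely at μ* = 2√λ_min with optimal value √λ_min. -/
-- Helper: classify real parts of roots
lemma aux_root_re (μ κ : ℝ) (z : ℂ) (hz : z ^ 2 - (μ : ℂ) * z + (κ : ℂ) = 0) :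
    (z.im = 0 ∧ z.re ^ 2 - μ * z.re + κ = 0) ∨ z.re = μ / 2 := by
  have him : z.im * (2 * z.re - μ) = 0 := by
    have := congrArg Complex.im hz
    simp [pow_two, Complex.mul_im, Complex.mul_re] at this
    ring_nf
    ring_nf at this
    linarith
  have hre : z.re ^ 2 - z.im ^ 2 - μ * z.re + κ = 0 := by
    have := congrArg Complex.re hz
    simp [pow_two, Complex.mul_re, Complex.mul_im] at this
    nlinarith [this]
  rcases mul_eq_zero.mp him with h | h
  · exact Or.inl ⟨h, by nlinarith⟩
  · exact Or.inr (by linarith)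

-- Helper: complex-root witness when μ² ≤ 4κ
lemma aux_wit1 (μ κ : ℝ) (h : μ ^ 2 ≤ 4 * κ) :
    ∃ z : ℂ, z ^ 2 - (μ : ℂ) * z + (κ : ℂ) = 0 ∧ z.re = μ / 2 := by
  set s : ℝ := Real.sqrt (κ - μ ^ 2 / 4) with hs
  have hs2 : s ^ 2 = κ - μ ^ 2 / 4 := Real.sq_sqrt (by linarith)
  refine ⟨(μ / 2 : ℝ) + Complex.I * (s : ℝ), ?_, by simp⟩
  have hs2' : ((s : ℂ)) ^ 2 = (κ : ℂ) - (μ : ℂ) ^ 2 / 4 := by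
    exact_mod_cast congrArg (fun x : ℝ => (x : ℂ)) hs2
  push_cast
  linear_combination (s : ℂ) ^ 2 * Complex.I_sq - hs2'

-- Helper: real-root witness when 4κ ≤ μ²
lemma aux_wit2 (μ κ : ℝ) (h : 4 * κ ≤ μ ^ 2) :
    ∃ z : ℂ, z ^ 2 - (μ : ℂ) * z + (κ : ℂ) = 0 ∧
      z.re = (μ - Real.sqrt (μ ^ 2 - 4 * κ)) / 2 := by
  set s : ℝ := Real.sqrt (μ ^ 2 - 4 * κ) with hs
  have hs2 : s ^ 2 = μ ^ 2 - 4 * κ := Real.sq_sqrt (by linarith)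
  refine ⟨(((μ - s) / 2 : ℝ) : ℂ), ?_, by simp⟩
  have hr : ((μ - s) / 2) ^ 2 - μ * ((μ - s) / 2) + κ = 0 := by nlinarith [hs2]
  exact_mod_cast congrArg (fun x : ℝ => (x : ℂ)) hr

/-- For `H` real symmetric positive definite with smallest eigenvalue
`λ_min`, let `g(μ)` be the infimum, over the eigenvalues `κ` of `H` and over the two complex
roots `z` of `z² − μz + κ = 0`, of `Re z`. Then `g(μ) ≤ √λ_min` for every `μ > 0`, with
equality if and only if `μ = 2√λ_min`; hence `sup_{μ>0} g(μ)` is attained uniquely at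
`μ* = 2√λ_min` with optimal value `√λ_min`. -/
theorem msgd_optimal_momentum
    {d : ℕ} (H : Matrix (Fin d) (Fin d) ℝ) (hH : H.PosDef)
    (lammin : ℝ) (hlammin_pos : 0 < lammin)
    (hlammin_le : ∀ i : Fin d, lammin ≤ hH.isHermitian.eigenvalues i)
    (hlammin_mem : ∃ i : Fin d, hH.isHermitian.eigenvalues i = lammin)
    (g : ℝ → ℝ)
    (hg : ∀ μ : ℝ, g μ = sInf {r : ℝ | ∃ i : Fin d, ∃ z : ℂ,
      z ^ 2 - (μ : ℂ) * z + (hH.isHermitian.eigenvalues i : ℂ) = 0 ∧ r = z.re}) :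
    (∀ μ : ℝ, 0 < μ → g μ ≤ Real.sqrt lammin) ∧
    (∀ μ : ℝ, 0 < μ → (g μ = Real.sqrt lammin ↔ μ = 2 * Real.sqrt lammin)) := by
  obtain ⟨i0, hi0⟩ := hlammin_mem
  set ev : Fin d → ℝ := hH.isHermitian.eigenvalues with hev
  have hevpos : ∀ i, 0 < ev i := fun i => lt_of_lt_of_le hlammin_pos (hlammin_le i)
  set L := Real.sqrt lammin with hL
  have hL2 : L ^ 2 = lammin := Real.sq_sqrt hlammin_pos.le
  have hLpos : 0 < L := Real.sqrt_pos.mpr hlammin_pos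
  set S : ℝ → Set ℝ := fun μ => {r : ℝ | ∃ i : Fin d, ∃ z : ℂ,
      z ^ 2 - (μ : ℂ) * z + (ev i : ℂ) = 0 ∧ r = z.re} with hS
  have hgS : ∀ μ, g μ = sInf (S μ) := hg
  -- all elements positive (for μ > 0)
  have hpos : ∀ μ : ℝ, 0 < μ → ∀ r ∈ S μ, 0 < r := by
    intro μ hμ r hr
    obtain ⟨i, z, hz, rfl⟩ := hr
    rcases aux_root_re μ (ev i) z hz with ⟨_, hre⟩ | hre
    · nlinarith [hevpos i]
    · rw [hre]; linarith
  have hbdd : ∀ μ : ℝ, 0 < μ → BddBelow (S μ) :=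
    fun μ hμ => ⟨0, fun r hr => (hpos μ hμ r hr).le⟩
  -- witness with value ≤ L, strict unless μ = 2L
  have hwit : ∀ μ : ℝ, 0 < μ → ∃ r ∈ S μ, r ≤ L ∧ (μ ≠ 2 * L → r < L) := by
    intro μ hμ
    rcases le_or_gt (μ ^ 2) (4 * lammin) with h | h
    · obtain ⟨z, hz, hzre⟩ := aux_wit1 μ lammin h
      refine ⟨μ / 2, ⟨i0, z, by rw [hi0]; exact hz, hzre.symm⟩, by nlinarith, ?_⟩
      intro hne
      have : μ ≤ 2 * L := by nlinarith
      rcases this.lt_or_eq with h' | h'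
      · linarith
      · exact absurd h' hne
    · obtain ⟨z, hz, hzre⟩ := aux_wit2 μ lammin h.le
      set s := Real.sqrt (μ ^ 2 - 4 * lammin) with hs
      have hs2 : s ^ 2 = μ ^ 2 - 4 * lammin := Real.sq_sqrt (by linarith)
      have hμ2L : 2 * L < μ := by nlinarith
      have hkey : μ - 2 * L < s := by
        have h1 : (μ - 2 * L) ^ 2 < μ ^ 2 - 4 * lammin := by nlinarith
        exact (Real.lt_sqrt (by linarith : (0:ℝ) ≤ μ - 2 * L)).mpr h1
      refine ⟨(μ - s) / 2, ⟨i0, z, by rw [hi0]; exact hz, hzre.symm⟩, by linarith, fun _ => by linarith⟩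
  constructor
  · intro μ hμ
    obtain ⟨r, hrS, hrle, _⟩ := hwit μ hμ
    rw [hgS]
    exact le_trans (csInf_le (hbdd μ hμ) hrS) hrle
  · intro μ hμ
    constructor
    · intro hgμ
      by_contra hne
      obtain ⟨r, hrS, _, hrlt⟩ := hwit μ hμ
      have := csInf_le (hbdd μ hμ) hrS
      rw [← hgS, hgμ] at this
      exact absurd (lt_of_le_of_lt this (hrlt hne)) (lt_irrefl _)
    · intro hμeq
      have hall : ∀ r ∈ S μ, r = L := by
        intro r hr
        obtain ⟨i, z, hz, rfl⟩ := hr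
        rcases aux_root_re μ (ev i) z hz with ⟨_, hre⟩ | hre
        · have hκ : lammin ≤ ev i := hlammin_le i
          have hsq : (z.re - L) ^ 2 ≤ 0 := by nlinarith
          have : (z.re - L) ^ 2 = 0 := le_antisymm hsq (sq_nonneg _)
          have := pow_eq_zero_iff (n := 2) (by norm_num) |>.mp this
          linarith [sub_eq_zero.mp this]
        · rw [hre, hμeq]; ring
      obtain ⟨r, hrS, _, _⟩ := hwit μ hμ
      have hLS : L ∈ S μ := (hall r hrS) ▸ hrS
      have : S μ = {L} := Set.eq_singleton_iff_unique_mem.mpr ⟨hLS, hall⟩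
      rw [hgS, this, csInf_singleton]
end

section
/- Fix λ > 0 and let D := (0, ∞) \ {2√λ}. For μ ∈ D define L₊(μ) and L₋(μ) as the real parts of the two roots (μ ± √(μ² − 4λ))/2 of z² − μz + λ = 0 (so L₊(μ) = L₋(μ) = μ/2 when μ < 2√λ, and L±(μ) = (μ ± √(μ² − 4λ))/2 when μ > 2√λ), and set φ(μ) := (λ³ / |μ² − 4λ|) · ( 1/(2L₊(μ)) + 1/(2L₋(μ)) − 2·min( μ/(4λ), 1/μ ) ). Then φ is strictly decreasing on D: for all μ₁, μ₂ ∈ D with μ₁ < μ₂ one has φ(μ₁) > φ(μ₂). -/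
/-- For `λ > 0`, the asymptotic noise-induced loss summand
`φ(μ) = (λ³/|μ² − 4λ|)(1/(2L₊) + 1/(2L₋) − 2 min(μ/(4λ), 1/μ))`, where `L₊, L₋` are the real
parts of the roots of `z² − μz + λ = 0`, is strictly decreasing on `D = (0, ∞) \ {2√λ}`. -/
theorem msgd_asymptotic_noise_strictly_decreasing
    (lam : ℝ) (hlam : 0 < lam)
    (Lp Lm φ : ℝ → ℝ)
    (hLp : ∀ μ : ℝ, Lp μ =
      if μ < 2 * Real.sqrt lam then μ / 2 else (μ + Real.sqrt (μ ^ 2 - 4 * lam)) / 2)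
    (hLm : ∀ μ : ℝ, Lm μ =
      if μ < 2 * Real.sqrt lam then μ / 2 else (μ - Real.sqrt (μ ^ 2 - 4 * lam)) / 2)
    (hφ : ∀ μ : ℝ, φ μ = (lam ^ 3 / |μ ^ 2 - 4 * lam|) *
      (1 / (2 * Lp μ) + 1 / (2 * Lm μ) - 2 * min (μ / (4 * lam)) (1 / μ))) :
    ∀ μ₁ μ₂ : ℝ, 0 < μ₁ → μ₁ ≠ 2 * Real.sqrt lam → 0 < μ₂ → μ₂ ≠ 2 * Real.sqrt lam →
      μ₁ < μ₂ → φ μ₂ < φ μ₁ := by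
  have key : ∀ μ : ℝ, 0 < μ → μ ≠ 2 * Real.sqrt lam → φ μ = lam ^ 2 / (2 * μ) := by
    intro μ hμ hne
    have hsq : Real.sqrt lam ^ 2 = lam := Real.sq_sqrt hlam.le
    have hsnn : 0 ≤ Real.sqrt lam := Real.sqrt_nonneg lam
    rcases lt_or_gt_of_ne hne with h | h
    · have h4 : μ ^ 2 < 4 * lam := by nlinarith
      have hd : μ ^ 2 - 4 * lam ≠ 0 := by nlinarith
      rw [hφ, hLp, hLm, if_pos h, if_pos h, abs_of_neg (by linarith),
        min_eq_left (by rw [div_le_div_iff₀ (by linarith) hμ]; nlinarith)]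
      have hd2 : μ ^ 2 - lam * 4 ≠ 0 := by linarith
      field_simp
      have h5 : 0 < 4 * lam - μ ^ 2 := by linarith
      have hX : 0 < -(lam * μ ^ 3 * 4) + lam ^ 2 * μ * 16 := by
        nlinarith [mul_pos (mul_pos hlam hμ) h5]
      field_simp [hX.ne']
      ring
    · have h4 : 4 * lam < μ ^ 2 := by nlinarith
      have hd : μ ^ 2 - 4 * lam ≠ 0 := by nlinarith
      rw [hφ, hLp, hLm, if_neg (not_lt.2 h.le), if_neg (not_lt.2 h.le),
        abs_of_pos (by linarith),
        min_eq_right (by rw [div_le_div_iff₀ hμ (by linarith)]; nlinarith)]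
      set r := Real.sqrt (μ ^ 2 - 4 * lam) with hrdef
      have hr2 : r ^ 2 = μ ^ 2 - 4 * lam := Real.sq_sqrt (by linarith)
      have hrnn : 0 ≤ r := Real.sqrt_nonneg _
      have hrlt : r < μ := by nlinarith
      have h1 : μ + r ≠ 0 := by positivity
      have h2 : μ - r ≠ 0 := by linarith [sub_pos.2 hrlt]
      have hd2 : μ ^ 2 - lam * 4 ≠ 0 := by linarith
      field_simp
      linear_combination μ ^ 2 * hr2
  intro μ₁ μ₂ h1 h1' h2 h2' hlt
  rw [key μ₁ h1 h1', key μ₂ h2 h2']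
  exact div_lt_div_of_pos_left (by positivity) (by linarith) (by linarith)
end

section
/- Let H be a real symmetric positive-definite d×d matrix, μ > 0 and η ∈ (0, 1). Let A₁ be the real 2d×2d block matrix A₁ = [ ( (μ + ημ²/2)I − (η/2)H , (1 + ημ/2)H ) ; ( −(1 − ημ/2)I , (η/2)H ) ]. Then the set of complex eigenvalues of A₁ equals { (1/4)( μ(ημ + 2) + s·√( μ²(ημ + 2)² + 4η²κ² − 8κ(ημ + 2) ) ) : κ an eigenvalue of H, s ∈ {+1, −1} }, where √ denotes a complex square root. -/
open Matrix Polynomial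

lemma my_eval_charpoly {R : Type*} [CommRing R] {m : Type*} [DecidableEq m] [Fintype m]
    (M : Matrix m m R) (z : R) : M.charpoly.eval z = (z • (1 : Matrix m m R) - M).det := by
  rw [Matrix.charpoly, _root_.eval_det, matPolyEquiv_charmatrix]
  congr 1
  simp [smul_one_eq_diagonal, Matrix.scalar]

lemma my_det_fromBlocks_diagonal {R : Type*} [CommRing R] {n : ℕ} (a b c e : Fin n → R) :
    (Matrix.fromBlocks (diagonal a) (diagonal b) (diagonal c) (diagonal e)).det
      = ∏ i, (a i * e i - b i * c i) := by
  classical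
  set E : (Fin 2 × Fin n) ≃ (Fin n ⊕ Fin n) :=
    (Equiv.prodCongr finTwoEquiv (Equiv.refl (Fin n))).trans (Equiv.boolProdEquivSum (Fin n))
  rw [← Matrix.det_submatrix_equiv_self E]
  have h : (Matrix.fromBlocks (diagonal a) (diagonal b) (diagonal c) (diagonal e)).submatrix E E
      = Matrix.blockDiagonal (fun i => !![a i, b i; c i, e i]) := by
    ext ⟨x, i⟩ ⟨y, j⟩
    fin_cases x <;> fin_cases y <;>
      by_cases hij : i = j <;>
      simp [E, finTwoEquiv, Matrix.blockDiagonal_apply, Matrix.diagonal_apply, hij,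
        Equiv.boolProdEquivSum]
  rw [h, Matrix.det_blockDiagonal]
  refine Finset.prod_congr rfl fun i _ => ?_
  simp [Matrix.det_fin_two_of]

lemma my_quad (μ η κ z : ℂ) :
    (z - (μ + η * μ ^ 2 / 2) + η / 2 * κ) * (z - η / 2 * κ)
        - -((1 + η * μ / 2) * κ) * (1 - η * μ / 2) = 0 ↔
      ∃ s : ℝ, (s = 1 ∨ s = -1) ∧ ∃ w : ℂ,
        w ^ 2 = μ ^ 2 * (η * μ + 2) ^ 2 + 4 * η ^ 2 * κ ^ 2 - 8 * κ * (η * μ + 2) ∧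
        z = (1 / 4) * (μ * (η * μ + 2) + (s : ℂ) * w) := by
  constructor
  · intro hq
    refine ⟨1, Or.inl rfl, 4 * z - 2 * (μ + η * μ ^ 2 / 2), ?_, by push_cast; ring⟩
    linear_combination 16 * hq
  · rintro ⟨s, hs, w, hw, rfl⟩
    have hs2 : (s : ℂ) ^ 2 = 1 := by rcases hs with rfl | rfl <;> norm_num
    linear_combination (w ^ 2 / 16) * hs2 + (1 / 16 : ℂ) * hw

/-- Eigenvalues of the drift matrix `A₁` of the order-2 stochastic modified
equation for momentum SGD on the quadratic model: they are
`(1/4)(μ(ημ+2) ± √(μ²(ημ+2)² + 4η²κ² − 8κ(ημ+2)))` as `κ` ranges over the eigenvalues of `H`. -/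
theorem msgd_order2_sme_drift_eigenvalues
    {d : ℕ} (H : Matrix (Fin d) (Fin d) ℝ) (hH : H.PosDef)
    (μ η : ℝ) (hμ : 0 < μ) (hη : 0 < η) (hη1 : η < 1) :
    {z : ℂ | (((Matrix.fromBlocks
        ((μ + η * μ ^ 2 / 2) • (1 : Matrix (Fin d) (Fin d) ℝ) - (η / 2) • H)
        ((1 + η * μ / 2) • H)
        (-((1 - η * μ / 2) • (1 : Matrix (Fin d) (Fin d) ℝ)))
        ((η / 2) • H)).map (algebraMap ℝ ℂ)).charpoly).IsRoot z} =
    {z : ℂ | ∃ i : Fin d, ∃ s : ℝ, (s = 1 ∨ s = -1) ∧ ∃ w : ℂ,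
      w ^ 2 = (μ : ℂ) ^ 2 * ((η : ℂ) * μ + 2) ^ 2
        + 4 * (η : ℂ) ^ 2 * (hH.isHermitian.eigenvalues i : ℂ) ^ 2
        - 8 * (hH.isHermitian.eigenvalues i : ℂ) * ((η : ℂ) * μ + 2) ∧
      z = (1 / 4) * ((μ : ℂ) * ((η : ℂ) * μ + 2) + (s : ℂ) * w)} := by
  classical
  have hherm := hH.isHermitian
  set κ : Fin d → ℝ := hherm.eigenvalues with hκdef
  set U : Matrix (Fin d) (Fin d) ℝ := (hherm.eigenvectorUnitary : Matrix (Fin d) (Fin d) ℝ)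
    with hUdef
  have hspec : H = U * Matrix.diagonal (RCLike.ofReal ∘ κ) * star U := hherm.spectral_theorem
  have hUU : U * star U = 1 := (Matrix.mem_unitaryGroup_iff).mp hherm.eigenvectorUnitary.2
  set K : Matrix (Fin d) (Fin d) ℂ := H.map (algebraMap ℝ ℂ) with hKdef
  set Uc : Matrix (Fin d) (Fin d) ℂ := U.map (algebraMap ℝ ℂ) with hUcdef
  have hstarmap : (star U).map (algebraMap ℝ ℂ) = star Uc := by
    show (Uᴴ).map (algebraMap ℝ ℂ) = (U.map (algebraMap ℝ ℂ))ᴴ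
    exact Matrix.conjTranspose_map _
      (fun x => by simp [Complex.coe_algebraMap, Complex.conj_ofReal])
  have hKc : K = Uc * Matrix.diagonal (fun i => (κ i : ℂ)) * star Uc := by
    rw [hKdef, hspec, Matrix.map_mul, Matrix.map_mul, hstarmap,
      Matrix.diagonal_map (map_zero (algebraMap ℝ ℂ)), ← hUcdef]
    congr 2
  have hUcU : Uc * star Uc = 1 := by
    rw [← hstarmap, hUcdef, ← Matrix.map_mul, hUU,
      Matrix.map_one _ (map_zero (algebraMap ℝ ℂ)) (map_one (algebraMap ℝ ℂ))]
  have hblock : ∀ p q : ℂ, p • (1 : Matrix (Fin d) (Fin d) ℂ) + q • K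
      = Uc * Matrix.diagonal (fun i => p + q * (κ i : ℂ)) * star Uc := by
    intro p q
    have h1 : Matrix.diagonal (fun i => p + q * (κ i : ℂ))
        = p • (1 : Matrix (Fin d) (Fin d) ℂ) + q • Matrix.diagonal (fun i => (κ i : ℂ)) := by
      rw [smul_one_eq_diagonal, ← Matrix.diagonal_smul, ← Matrix.diagonal_add]
      congr 1
    rw [h1, Matrix.mul_add, Matrix.add_mul]
    congr 1
    · rw [Matrix.mul_smul, Matrix.mul_one, Matrix.smul_mul, hUcU]
    · rw [Matrix.mul_smul, Matrix.smul_mul, ← hKc]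
  have hA : (Matrix.fromBlocks
        ((μ + η * μ ^ 2 / 2) • (1 : Matrix (Fin d) (Fin d) ℝ) - (η / 2) • H)
        ((1 + η * μ / 2) • H)
        (-((1 - η * μ / 2) • (1 : Matrix (Fin d) (Fin d) ℝ)))
        ((η / 2) • H)).map (algebraMap ℝ ℂ)
      = Matrix.fromBlocks
        (((μ : ℂ) + (η : ℂ) * (μ : ℂ) ^ 2 / 2) • (1 : Matrix (Fin d) (Fin d) ℂ)
          - ((η : ℂ) / 2) • K)
        (((1 : ℂ) + (η : ℂ) * (μ : ℂ) / 2) • K)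
        (-(((1 : ℂ) - (η : ℂ) * (μ : ℂ) / 2) • (1 : Matrix (Fin d) (Fin d) ℂ)))
        (((η : ℂ) / 2) • K) := by
    ext (i | i) (j | j) <;>
      (simp only [Matrix.fromBlocks, Matrix.map_apply, Matrix.of_apply, Sum.elim_inl,
          Sum.elim_inr, Matrix.sub_apply, Matrix.neg_apply, Matrix.smul_apply, smul_eq_mul,
          Matrix.one_apply, hKdef, Complex.coe_algebraMap, mul_ite, mul_one, mul_zero, apply_ite];
        try split_ifs) <;> push_cast <;> ring
  ext z
  simp only [Set.mem_setOf_eq, Polynomial.IsRoot, my_eval_charpoly, hA]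
  set P : Matrix (Fin d ⊕ Fin d) (Fin d ⊕ Fin d) ℂ := Matrix.fromBlocks Uc 0 0 Uc with hPdef
  have hPstar : star P = Matrix.fromBlocks (star Uc) 0 0 (star Uc) := by
    show Pᴴ = _
    rw [hPdef, Matrix.fromBlocks_conjTranspose]
    simp [Matrix.star_eq_conjTranspose]
  have hTL : z • (1 : Matrix (Fin d) (Fin d) ℂ)
        + -(((μ : ℂ) + (η : ℂ) * (μ : ℂ) ^ 2 / 2) • (1 : Matrix (Fin d) (Fin d) ℂ)
          - ((η : ℂ) / 2) • K)
      = Uc * Matrix.diagonal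
          (fun i => z - ((μ : ℂ) + (η : ℂ) * (μ : ℂ) ^ 2 / 2) + (η : ℂ) / 2 * (κ i : ℂ))
        * star Uc := by
    rw [← hblock, sub_smul]
    abel
  have hTR : -((((1 : ℂ) + (η : ℂ) * (μ : ℂ) / 2)) • K)
      = Uc * Matrix.diagonal
          (fun i => -(((1 : ℂ) + (η : ℂ) * (μ : ℂ) / 2) * (κ i : ℂ))) * star Uc := by
    have h := hblock 0 (-((1 : ℂ) + (η : ℂ) * (μ : ℂ) / 2))
    simp only [zero_smul, zero_add, neg_smul, neg_mul] at h
    exact h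
  have hBL : ((1 : ℂ) - (η : ℂ) * (μ : ℂ) / 2) • (1 : Matrix (Fin d) (Fin d) ℂ)
      = Uc * Matrix.diagonal (fun _ : Fin d => ((1 : ℂ) - (η : ℂ) * (μ : ℂ) / 2)) * star Uc := by
    have h := hblock ((1 : ℂ) - (η : ℂ) * (μ : ℂ) / 2) 0
    simp only [zero_smul, add_zero, zero_mul] at h
    exact h
  have hBR : z • (1 : Matrix (Fin d) (Fin d) ℂ) + -(((η : ℂ) / 2) • K)
      = Uc * Matrix.diagonal (fun i => z - (η : ℂ) / 2 * (κ i : ℂ)) * star Uc := by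
    have h := hblock z (-((η : ℂ) / 2))
    simp only [neg_smul, neg_mul, ← sub_eq_add_neg] at h
    exact h
  set N : Matrix (Fin d ⊕ Fin d) (Fin d ⊕ Fin d) ℂ := Matrix.fromBlocks
      (Matrix.diagonal fun i =>
        z - ((μ : ℂ) + (η : ℂ) * (μ : ℂ) ^ 2 / 2) + (η : ℂ) / 2 * (κ i : ℂ))
      (Matrix.diagonal fun i => -(((1 : ℂ) + (η : ℂ) * (μ : ℂ) / 2) * (κ i : ℂ)))
      (Matrix.diagonal fun _ => ((1 : ℂ) - (η : ℂ) * (μ : ℂ) / 2))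
      (Matrix.diagonal fun i => z - (η : ℂ) / 2 * (κ i : ℂ)) with hNdef
  have key : z • (1 : Matrix (Fin d ⊕ Fin d) (Fin d ⊕ Fin d) ℂ) - Matrix.fromBlocks
        (((μ : ℂ) + (η : ℂ) * (μ : ℂ) ^ 2 / 2) • (1 : Matrix (Fin d) (Fin d) ℂ)
          - ((η : ℂ) / 2) • K)
        (((1 : ℂ) + (η : ℂ) * (μ : ℂ) / 2) • K)
        (-(((1 : ℂ) - (η : ℂ) * (μ : ℂ) / 2) • (1 : Matrix (Fin d) (Fin d) ℂ)))
        (((η : ℂ) / 2) • K)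
      = P * N * star P := by
    rw [hPstar, hPdef, hNdef, Matrix.fromBlocks_multiply, Matrix.fromBlocks_multiply,
      ← Matrix.fromBlocks_one, Matrix.fromBlocks_smul, sub_eq_add_neg, Matrix.fromBlocks_neg,
      Matrix.fromBlocks_add, Matrix.fromBlocks_inj]
    refine ⟨?_, ?_, ?_, ?_⟩ <;> simp only [Matrix.mul_zero, Matrix.zero_mul,
      add_zero, zero_add, smul_zero, neg_neg]
    · exact hTL
    · exact hTR
    · exact hBL
    · exact hBR
  rw [key]
  have hPP : P * star P = 1 := by
    rw [hPstar, hPdef, Matrix.fromBlocks_multiply]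
    simp [hUcU, Matrix.fromBlocks_one]
  have hdet : (P * N * star P).det = N.det := by
    rw [Matrix.det_mul, Matrix.det_mul]
    have h2 : P.det * N.det * (star P).det = N.det * (P * star P).det := by
      rw [Matrix.det_mul]; ring
    rw [h2, hPP, Matrix.det_one, mul_one]
  rw [hdet, hNdef, my_det_fromBlocks_diagonal, Finset.prod_eq_zero_iff]
  constructor
  · rintro ⟨i, -, hi⟩
    exact ⟨i, (my_quad (μ : ℂ) (η : ℂ) ((κ i : ℝ) : ℂ) z).mp hi⟩
  · rintro ⟨i, hi⟩
    exact ⟨i, Finset.mem_univ i, (my_quad (μ : ℂ) (η : ℂ) ((κ i : ℝ) : ℂ) z).mpr hi⟩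
end

section
/- Let H be a real symmetric positive-definite d×d matrix, μ > 0 and η ∈ (0, 1). Let A₂ be the real 2d×2d block matrix A₂ = [ ( (μ + ημ²/2)I + (η/2)H , (1 + ημ/2)H ) ; ( −(1 − ημ/2)I , (η/2)H ) ]. Then the set of complex eigenvalues of A₂ equals { (1/4)( μ(ημ + 2) + 2ηκ + s·√(ημ + 2)·√( μ²(ημ + 2) + 4κ(ημ − 2) ) ) : κ an eigenvalue of H, s ∈ {+1, −1} }, where √ denotes a complex square root (and √(ημ+2) the positive real root). -/
open Matrix Polynomial

private lemma evalCharpoly {n : Type*} [DecidableEq n] [Fintype n]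
    (M : Matrix n n ℂ) (z : ℂ) :
    M.charpoly.eval z = (z • (1 : Matrix n n ℂ) - M).det := by
  have h : (Matrix.charmatrix M).map (Polynomial.evalRingHom z)
      = z • (1 : Matrix n n ℂ) - M := by
    ext i j
    by_cases h : i = j <;>
      simp [Matrix.charmatrix_apply, Matrix.one_apply, h, Matrix.diagonal_apply]
  rw [Matrix.charpoly, ← h, ← RingHom.mapMatrix_apply, ← RingHom.map_det]
  rfl

private def sumFinEquiv (d : ℕ) : (Fin d) ⊕ (Fin d) ≃ (Fin 2) × (Fin d) where
  toFun x := Sum.elim (fun i => ((0 : Fin 2), i)) (fun i => ((1 : Fin 2), i)) x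
  invFun p := if p.1 = 0 then Sum.inl p.2 else Sum.inr p.2
  left_inv := by rintro (i | i) <;> simp
  right_inv := by rintro ⟨k, i⟩; fin_cases k <;> simp

private lemma det_fromBlocks_diagonal {d : ℕ} (p q r s : Fin d → ℂ) :
    (Matrix.fromBlocks (diagonal p) (diagonal q) (diagonal r) (diagonal s)).det
      = ∏ i, (p i * s i - q i * r i) := by
  have key : Matrix.fromBlocks (diagonal p) (diagonal q) (diagonal r) (diagonal s)
      = (Matrix.blockDiagonal (fun i : Fin d => !![p i, q i; r i, s i])).submatrix
        (sumFinEquiv d) (sumFinEquiv d) := by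
    ext x y
    rcases x with i | i <;> rcases y with j | j <;>
      by_cases h : i = j <;>
        simp [sumFinEquiv, Matrix.blockDiagonal_apply, Matrix.diagonal_apply, h,
          Matrix.fromBlocks]
  rw [key, Matrix.det_submatrix_equiv_self, Matrix.det_blockDiagonal]
  simp [Matrix.det_fin_two_of]

private lemma fromBlocks_sub' {n m : Type*} (A A' : Matrix n n ℂ) (B B' : Matrix n m ℂ)
    (C C' : Matrix m n ℂ) (D D' : Matrix m m ℂ) :
    Matrix.fromBlocks A B C D - Matrix.fromBlocks A' B' C' D'
      = Matrix.fromBlocks (A - A') (B - B') (C - C') (D - D') := by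
  ext x y
  rcases x with i | i <;> rcases y with j | j <;> simp [Matrix.fromBlocks]

/-- Eigenvalues of the drift matrix `A₂` of the order-2 stochastic modified
equation for the stochastic Nesterov accelerated gradient method on the quadratic model:
they are `(1/4)(μ(ημ+2) + 2ηκ ± √(ημ+2)·√(μ²(ημ+2) + 4κ(ημ−2)))` as `κ` ranges over the
eigenvalues of `H`. -/
theorem snag_order2_sme_drift_eigenvalues
    {d : ℕ} (H : Matrix (Fin d) (Fin d) ℝ) (hH : H.PosDef)
    (μ η : ℝ) (hμ : 0 < μ) (hη : 0 < η) (hη1 : η < 1) :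
    {z : ℂ | (((Matrix.fromBlocks
        ((μ + η * μ ^ 2 / 2) • (1 : Matrix (Fin d) (Fin d) ℝ) + (η / 2) • H)
        ((1 + η * μ / 2) • H)
        (-((1 - η * μ / 2) • (1 : Matrix (Fin d) (Fin d) ℝ)))
        ((η / 2) • H)).map (algebraMap ℝ ℂ)).charpoly).IsRoot z} =
    {z : ℂ | ∃ i : Fin d, ∃ s : ℝ, (s = 1 ∨ s = -1) ∧ ∃ w : ℂ,
      w ^ 2 = (μ : ℂ) ^ 2 * ((η : ℂ) * μ + 2)
        + 4 * (hH.isHermitian.eigenvalues i : ℂ) * ((η : ℂ) * μ - 2) ∧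
      z = (1 / 4) * ((μ : ℂ) * ((η : ℂ) * μ + 2)
        + 2 * (η : ℂ) * (hH.isHermitian.eigenvalues i : ℂ)
        + (s : ℂ) * (Real.sqrt (η * μ + 2) : ℂ) * w)} := by
  classical
  set κ : Fin d → ℝ := hH.isHermitian.eigenvalues with hκ
  set V : Matrix (Fin d) (Fin d) ℝ := (hH.isHermitian.eigenvectorUnitary : Matrix (Fin d) (Fin d) ℝ) with hV
  set Vc : Matrix (Fin d) (Fin d) ℂ := V.map (algebraMap ℝ ℂ) with hVc
  set Wc : Matrix (Fin d) (Fin d) ℂ := (star V).map (algebraMap ℝ ℂ) with hWc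
  set Dc : Matrix (Fin d) (Fin d) ℂ := diagonal (fun i => (κ i : ℂ)) with hDc
  have hVW : Vc * Wc = 1 := by
    rw [hVc, hWc, ← Matrix.map_mul,
      (Matrix.mem_unitaryGroup_iff).mp hH.isHermitian.eigenvectorUnitary.2]
    simp
  have hHc : H.map (algebraMap ℝ ℂ) = Vc * Dc * Wc := by
    conv_lhs => rw [hH.isHermitian.spectral_theorem]
    rw [Unitary.conjStarAlgAut_apply]
    rw [Matrix.map_mul, Matrix.map_mul]
    congr 1
    congr 1
    rw [Matrix.diagonal_map (map_zero (algebraMap ℝ ℂ))]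
    rfl
  -- real scalars
  have map_smul' : ∀ (r : ℝ) (M : Matrix (Fin d) (Fin d) ℝ),
      (r • M).map (algebraMap ℝ ℂ) = (r : ℂ) • M.map (algebraMap ℝ ℂ) := by
    intro r M
    ext i j
    simp [Matrix.map_apply, Complex.coe_algebraMap, Complex.ofReal_mul]
  have map_one' : (1 : Matrix (Fin d) (Fin d) ℝ).map (algebraMap ℝ ℂ) = 1 := by
    simp [Matrix.map_one (algebraMap ℝ ℂ) (map_zero _) (map_one _)]
  -- mapped matrix
  have hMc : ((Matrix.fromBlocks
        ((μ + η * μ ^ 2 / 2) • (1 : Matrix (Fin d) (Fin d) ℝ) + (η / 2) • H)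
        ((1 + η * μ / 2) • H)
        (-((1 - η * μ / 2) • (1 : Matrix (Fin d) (Fin d) ℝ)))
        ((η / 2) • H)).map (algebraMap ℝ ℂ)) =
      Matrix.fromBlocks
        (((μ + η * μ ^ 2 / 2 : ℝ) : ℂ) • 1 + ((η / 2 : ℝ) : ℂ) • H.map (algebraMap ℝ ℂ))
        (((1 + η * μ / 2 : ℝ) : ℂ) • H.map (algebraMap ℝ ℂ))
        (-(((1 - η * μ / 2 : ℝ) : ℂ) • 1))
        (((η / 2 : ℝ) : ℂ) • H.map (algebraMap ℝ ℂ)) := by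
    have e1 : ((μ + η * μ ^ 2 / 2) • (1 : Matrix (Fin d) (Fin d) ℝ)
        + (η / 2) • H).map (algebraMap ℝ ℂ)
        = ((μ + η * μ ^ 2 / 2 : ℝ) : ℂ) • 1 + ((η / 2 : ℝ) : ℂ) • H.map (algebraMap ℝ ℂ) := by
      rw [Matrix.map_add _ (fun a b => map_add (algebraMap ℝ ℂ) a b), map_smul', map_smul', map_one']
    have e3 : (-((1 - η * μ / 2) • (1 : Matrix (Fin d) (Fin d) ℝ))).map (algebraMap ℝ ℂ)
        = -(((1 - η * μ / 2 : ℝ) : ℂ) • 1) := by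
      ext i j
      by_cases h : i = j <;>
        simp [Matrix.map_apply, Matrix.one_apply, h, Complex.coe_algebraMap]
    rw [Matrix.fromBlocks_map, e1, e3, map_smul', map_smul']
  ext z
  simp only [Set.mem_setOf_eq, Polynomial.IsRoot]
  rw [evalCharpoly, hMc]
  -- block by block
  set aR : ℝ := μ + η * μ ^ 2 / 2
  set bR : ℝ := 1 + η * μ / 2
  set cR : ℝ := 1 - η * μ / 2
  set eR : ℝ := η / 2
  set N : Matrix ((Fin d) ⊕ (Fin d)) ((Fin d) ⊕ (Fin d)) ℂ :=
    Matrix.fromBlocks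
      (diagonal (fun i => z - (aR : ℂ) - (eR : ℂ) * (κ i : ℂ)))
      (diagonal (fun i => -((bR : ℂ) * (κ i : ℂ))))
      (diagonal (fun _ => (cR : ℂ)))
      (diagonal (fun i => z - (eR : ℂ) * (κ i : ℂ))) with hN
  set P : Matrix ((Fin d) ⊕ (Fin d)) ((Fin d) ⊕ (Fin d)) ℂ :=
    Matrix.fromBlocks Vc 0 0 Vc with hP
  set Q : Matrix ((Fin d) ⊕ (Fin d)) ((Fin d) ⊕ (Fin d)) ℂ :=
    Matrix.fromBlocks Wc 0 0 Wc with hQ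
  have d1 : diagonal (fun i => z - (aR : ℂ) - (eR : ℂ) * (κ i : ℂ))
      = z • (1 : Matrix (Fin d) (Fin d) ℂ) - ((aR : ℂ) • 1 + (eR : ℂ) • Dc) := by
    ext i j
    by_cases h : i = j <;>
      simp [h, Matrix.diagonal_apply, Matrix.one_apply, hDc]
    ring
  have d2 : diagonal (fun i => -((bR : ℂ) * (κ i : ℂ)))
      = -((bR : ℂ) • Dc) := by
    ext i j
    by_cases h : i = j <;> simp [h, Matrix.diagonal_apply, hDc]
  have d3 : diagonal (fun _ : Fin d => (cR : ℂ)) = (cR : ℂ) • 1 := by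
    ext i j
    by_cases h : i = j <;> simp [h, Matrix.diagonal_apply, Matrix.one_apply]
  have d4 : diagonal (fun i => z - (eR : ℂ) * (κ i : ℂ))
      = z • (1 : Matrix (Fin d) (Fin d) ℂ) - (eR : ℂ) • Dc := by
    ext i j
    by_cases h : i = j <;> simp [h, Matrix.diagonal_apply, Matrix.one_apply, hDc]
  have conj : ∀ M : Matrix (Fin d) (Fin d) ℂ, Vc * (z • 1 - M) * Wc
      = z • 1 - Vc * M * Wc := by
    intro M
    rw [Matrix.mul_sub, Matrix.sub_mul, Matrix.mul_smul, Matrix.mul_one,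
      Matrix.smul_mul, hVW]
  have hkey : z • (1 : Matrix ((Fin d) ⊕ (Fin d)) ((Fin d) ⊕ (Fin d)) ℂ)
      - Matrix.fromBlocks
        (((μ + η * μ ^ 2 / 2 : ℝ) : ℂ) • 1 + ((η / 2 : ℝ) : ℂ) • H.map (algebraMap ℝ ℂ))
        (((1 + η * μ / 2 : ℝ) : ℂ) • H.map (algebraMap ℝ ℂ))
        (-(((1 - η * μ / 2 : ℝ) : ℂ) • 1))
        (((η / 2 : ℝ) : ℂ) • H.map (algebraMap ℝ ℂ))
      = P * N * Q := by
    have hsand : ∀ M : Matrix (Fin d) (Fin d) ℂ,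
        Vc * (z • 1 - M) * Wc = z • 1 - Vc * M * Wc := by
      intro M
      simp only [Matrix.mul_sub, Matrix.sub_mul, Matrix.mul_smul, Matrix.smul_mul,
        Matrix.mul_one, hVW]
    have b11 : z • (1 : Matrix (Fin d) (Fin d) ℂ)
        - ((aR : ℂ) • 1 + (eR : ℂ) • H.map (algebraMap ℝ ℂ))
        = Vc * (diagonal fun i => z - (aR : ℂ) - (eR : ℂ) * (κ i : ℂ)) * Wc := by
      rw [d1, hsand]
      simp only [Matrix.mul_add, Matrix.add_mul, Matrix.mul_smul, Matrix.smul_mul,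
        Matrix.mul_one, hVW]
      rw [← hHc]
    have b12 : -((bR : ℂ) • H.map (algebraMap ℝ ℂ))
        = Vc * (diagonal fun i => -((bR : ℂ) * (κ i : ℂ))) * Wc := by
      rw [d2]
      simp only [Matrix.mul_neg, Matrix.neg_mul, Matrix.mul_smul, Matrix.smul_mul]
      rw [← hHc]
    have b21 : (cR : ℂ) • (1 : Matrix (Fin d) (Fin d) ℂ)
        = Vc * (diagonal fun _ : Fin d => (cR : ℂ)) * Wc := by
      rw [d3]
      simp only [Matrix.mul_smul, Matrix.smul_mul, Matrix.mul_one, hVW]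
    have b22 : z • (1 : Matrix (Fin d) (Fin d) ℂ)
        - (eR : ℂ) • H.map (algebraMap ℝ ℂ)
        = Vc * (diagonal fun i => z - (eR : ℂ) * (κ i : ℂ)) * Wc := by
      rw [d4, hsand]
      simp only [Matrix.mul_smul, Matrix.smul_mul]
      rw [← hHc]
    rw [hP, hN, hQ, Matrix.fromBlocks_multiply, Matrix.fromBlocks_multiply]
    simp only [Matrix.zero_mul, Matrix.mul_zero, add_zero, zero_add]
    rw [← Matrix.fromBlocks_one, Matrix.fromBlocks_smul, fromBlocks_sub']
    simp only [smul_zero, zero_sub, neg_neg]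
    rw [b11, b12, b21, b22]
  rw [hkey]
  have hdet : (P * N * Q).det = N.det := by
    have hPQ : P * Q = 1 := by
      rw [hP, hQ, Matrix.fromBlocks_multiply]
      simp [hVW, Matrix.fromBlocks_one]
    have := congrArg Matrix.det hPQ
    rw [Matrix.det_mul] at this
    rw [Matrix.det_mul, Matrix.det_mul, mul_comm P.det N.det, mul_assoc, this,
      Matrix.det_one, mul_one]
  rw [hdet, hN, det_fromBlocks_diagonal]
  rw [Finset.prod_eq_zero_iff]
  -- now pure scalar algebra
  have hr2 : ((Real.sqrt (η * μ + 2) : ℝ) : ℂ) ^ 2 = (η : ℂ) * μ + 2 := by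
    rw [← Complex.ofReal_pow, Real.sq_sqrt (by nlinarith)]
    push_cast
    ring
  have hr0 : ((Real.sqrt (η * μ + 2) : ℝ) : ℂ) ≠ 0 := by
    simp only [ne_eq, Complex.ofReal_eq_zero]
    positivity
  set r : ℂ := ((Real.sqrt (η * μ + 2) : ℝ) : ℂ) with hr
  constructor
  · rintro ⟨i, -, hQz⟩
    refine ⟨i, 1, Or.inl rfl, (4 * z - ((μ : ℂ) * ((η : ℂ) * μ + 2)
      + 2 * (η : ℂ) * (κ i : ℂ))) / r, ?_, ?_⟩
    · rw [div_pow]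
      rw [div_eq_iff (pow_ne_zero 2 hr0)]
      have hQz' : (z - (aR : ℂ) - (eR : ℂ) * (κ i : ℂ)) * (z - (eR : ℂ) * (κ i : ℂ))
          - -((bR : ℂ) * (κ i : ℂ)) * (cR : ℂ) = 0 := hQz
      simp only [aR, bR, cR, eR] at hQz'
      push_cast at hQz' ⊢
      linear_combination 16 * hQz' + ((μ : ℂ) ^ 2 * ((η : ℂ) * μ + 2)
        + 4 * (κ i : ℂ) * ((η : ℂ) * μ - 2) + 16 * (κ i : ℂ)
        - 8 * (μ : ℂ) * (η : ℂ) * (κ i : ℂ) - 4 * (μ : ℂ) ^ 2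
        - 2 * (μ : ℂ) ^ 3 * (η : ℂ)) * hr2
    · push_cast
      field_simp
      ring
  · rintro ⟨i, s, hs, w, hw, hz⟩
    refine ⟨i, Finset.mem_univ i, ?_⟩
    have hs2 : (s : ℂ) ^ 2 = 1 := by
      rcases hs with h | h <;> rw [h] <;> norm_num
    show (z - (aR : ℂ) - (eR : ℂ) * (κ i : ℂ)) * (z - (eR : ℂ) * (κ i : ℂ))
        - -((bR : ℂ) * (κ i : ℂ)) * (cR : ℂ) = 0
    rw [hz]
    simp only [aR, bR, cR, eR]
    push_cast
    linear_combination ((s : ℂ) ^ 2 * r ^ 2 / 16) * hw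
      + (((μ : ℂ) ^ 2 * ((η : ℂ) * μ + 2) + 4 * (κ i : ℂ) * ((η : ℂ) * μ - 2)) / 16)
        * ((s : ℂ) ^ 2 * hr2)
      + ((r ^ 2 * w ^ 2 / 16 + ((η:ℂ)*μ+2) * ((μ : ℂ) ^ 2 * ((η : ℂ) * μ + 2)
        + 4 * (κ i : ℂ) * ((η : ℂ) * μ - 2)) / 16) * hs2)
      + (-(r ^ 2 * w ^ 2) / 16) * hs2
end

section
/- Define φ : ℝ^d → ℝ^{d×d} by φ(u) := u u^T / |u| for u ≠ 0 and φ(0) := 0. Then: (i) for every u ∈ ℝ^d, φ(u) is the (unique) positive semidefinite square root of the matrix u u^T, i.e. φ(u) is symmetric positive semidefinite and φ(u)² = u u^T; and (ii) φ is Lipschitz continuous: there exists a constant L′ > 0 such that ‖φ(u) − φ(v)‖ ≤ L′ |u − v| for all u, v ∈ ℝ^d, where ‖·‖ is the Frobenius norm. -/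
open Matrix

open Finset in
lemma sum_sum_mul_mul {d : ℕ} (x y : Fin d → ℝ) :
    ∑ i, ∑ j, (x i * x j) * (y i * y j) = (∑ i, x i * y i) ^ 2 := by
  rw [sq, Finset.sum_mul_sum]
  exact Finset.sum_congr rfl fun i _ => Finset.sum_congr rfl fun j _ => by ring

lemma euclid_inner_eq {d : ℕ} (x y : EuclideanSpace ℝ (Fin d)) :
    (inner ℝ x y : ℝ) = ∑ i, x i * y i := by
  simp [PiLp.inner_apply, RCLike.inner_apply, mul_comm]

lemma euclid_sum_sq {d : ℕ} (x : EuclideanSpace ℝ (Fin d)) :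
    ∑ i, x i * x i = ‖x‖ ^ 2 := by
  rw [← euclid_inner_eq, real_inner_self_eq_norm_sq]

/-- The map `φ(u) = u uᵀ / |u|` (with `φ(0) = 0`) is, for each `u`, the
positive semidefinite square root of `u uᵀ`, and `φ` is Lipschitz in the Frobenius norm. -/
theorem rank_one_sqrt_lipschitz
    {d : ℕ} (φ : EuclideanSpace ℝ (Fin d) → Matrix (Fin d) (Fin d) ℝ)
    (hφ0 : φ 0 = 0)
    (hφ : ∀ u : EuclideanSpace ℝ (Fin d), u ≠ 0 →
      φ u = ‖u‖⁻¹ • Matrix.of (fun i j => u i * u j)) :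
    -- (i) `φ u` is the positive semidefinite square root of `u uᵀ`
    (∀ u : EuclideanSpace ℝ (Fin d),
      (φ u).PosSemidef ∧ φ u * φ u = Matrix.of (fun i j => u i * u j)) ∧
    -- (ii) `φ` is Lipschitz
    (∃ L' : ℝ, 0 < L' ∧ ∀ u v : EuclideanSpace ℝ (Fin d),
      frobNorm (φ u - φ v) ≤ L' * ‖u - v‖) := by
  constructor
  · -- part (i)
    intro u
    by_cases hu : u = 0
    · subst hu
      rw [hφ0]
      refine ⟨Matrix.PosSemidef.zero, ?_⟩
      ext i j
      simp
    · rw [hφ u hu]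
      have ha : (0:ℝ) < ‖u‖ := norm_pos_iff.mpr hu
      constructor
      · rw [Matrix.posSemidef_iff_dotProduct_mulVec]
        constructor
        · ext i j
          simp [Matrix.conjTranspose_apply, mul_comm]
        · intro x
          have hmv : ∀ i, ((‖u‖⁻¹ • Matrix.of fun i j => u i * u j) *ᵥ x) i
              = ‖u‖⁻¹ * u i * (∑ j, u j * x j) := by
            intro i
            simp only [Matrix.mulVec, dotProduct, Matrix.smul_apply, Matrix.of_apply,
              smul_eq_mul, Finset.mul_sum]
            exact Finset.sum_congr rfl fun j _ => by ring
          have : dotProduct (star x) ((‖u‖⁻¹ • Matrix.of fun i j => u i * u j) *ᵥ x)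
              = ‖u‖⁻¹ * (∑ j, u j * x j) ^ 2 := by
            have hsum : ∀ S : ℝ, ∑ i, x i * (‖u‖⁻¹ * u i * S) = ‖u‖⁻¹ * (∑ i, u i * x i) * S := by
              intro S
              rw [Finset.mul_sum, Finset.sum_mul]
              exact Finset.sum_congr rfl fun i _ => by ring
            simp only [dotProduct, Pi.star_apply, star_trivial]
            rw [funext hmv, hsum]
            ring
          rw [this]
          positivity
      · ext i j
        simp only [Matrix.mul_apply, Matrix.smul_apply, Matrix.of_apply, smul_eq_mul]
        have : ∑ k, ‖u‖⁻¹ * (u i * u k) * (‖u‖⁻¹ * (u k * u j))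
            = ‖u‖⁻¹ * ‖u‖⁻¹ * (u i * u j) * (∑ k, u k * u k) := by
          rw [Finset.mul_sum]
          exact Finset.sum_congr rfl fun k _ => by ring
        rw [this, euclid_sum_sq]
        have h2 : ‖u‖⁻¹ * ‖u‖⁻¹ * ‖u‖ ^ 2 = 1 := by
          field_simp
        calc ‖u‖⁻¹ * ‖u‖⁻¹ * (u i * u j) * ‖u‖ ^ 2
            = (‖u‖⁻¹ * ‖u‖⁻¹ * ‖u‖ ^ 2) * (u i * u j) := by ring
          _ = u i * u j := by rw [h2]; ring
  · -- part (ii)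
    refine ⟨2, by norm_num, fun u v => ?_⟩
    have frob_le : ∀ M : Matrix (Fin d) (Fin d) ℝ, ∀ c : ℝ, 0 ≤ c →
        (∑ i, ∑ j, (M i j) ^ 2) ≤ c ^ 2 → frobNorm M ≤ c := by
      intro M c hc h
      rw [frobNorm]
      calc Real.sqrt (∑ i, ∑ j, (M i j) ^ 2) ≤ Real.sqrt (c ^ 2) := Real.sqrt_le_sqrt h
        _ = c := Real.sqrt_sq hc
    -- expand the sum of squares for the nonzero/nonzero case
    by_cases hu : u = 0
    · subst hu
      by_cases hv : v = 0
      · subst hv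
        rw [hφ0, sub_self]
        refine frob_le _ _ (by positivity) ?_
        simp [Matrix.zero_apply]
      · rw [hφ0, hφ v hv]
        refine frob_le _ _ (by positivity) ?_
        have hb : (0:ℝ) < ‖v‖ := norm_pos_iff.mpr hv
        have : ∑ i, ∑ j, ((0 - ‖v‖⁻¹ • Matrix.of fun i j => v i * v j) i j) ^ 2
            = ‖v‖⁻¹ ^ 2 * (∑ i, ∑ j, (v i * v j) * (v i * v j)) := by
          simp only [Matrix.sub_apply, Matrix.zero_apply, Matrix.smul_apply, Matrix.of_apply,
            smul_eq_mul, Finset.mul_sum]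
          exact Finset.sum_congr rfl fun i _ => Finset.sum_congr rfl fun j _ => by ring
        rw [this, sum_sum_mul_mul, euclid_sum_sq]
        have h1 : ‖v‖⁻¹ ^ 2 * (‖v‖ ^ 2) ^ 2 = ‖v‖ ^ 2 := by
          field_simp
        rw [h1]
        have : ‖(0 : EuclideanSpace ℝ (Fin d)) - v‖ = ‖v‖ := by simp
        rw [this]
        nlinarith [sq_nonneg ‖v‖]
    · by_cases hv : v = 0
      · subst hv
        rw [hφ0, hφ u hu]
        refine frob_le _ _ (by positivity) ?_
        have ha : (0:ℝ) < ‖u‖ := norm_pos_iff.mpr hu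
        have : ∑ i, ∑ j, ((‖u‖⁻¹ • Matrix.of (fun i j => u i * u j) - 0) i j) ^ 2
            = ‖u‖⁻¹ ^ 2 * (∑ i, ∑ j, (u i * u j) * (u i * u j)) := by
          simp only [Matrix.sub_apply, Matrix.zero_apply, Matrix.smul_apply, Matrix.of_apply,
            smul_eq_mul, Finset.mul_sum]
          exact Finset.sum_congr rfl fun i _ => Finset.sum_congr rfl fun j _ => by ring
        rw [this, sum_sum_mul_mul, euclid_sum_sq]
        have h1 : ‖u‖⁻¹ ^ 2 * (‖u‖ ^ 2) ^ 2 = ‖u‖ ^ 2 := by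
          field_simp
        rw [h1]
        have : ‖u - (0 : EuclideanSpace ℝ (Fin d))‖ = ‖u‖ := by simp
        rw [this]
        nlinarith [sq_nonneg ‖u‖]
      · rw [hφ u hu, hφ v hv]
        refine frob_le _ _ (by positivity) ?_
        have ha : (0:ℝ) < ‖u‖ := norm_pos_iff.mpr hu
        have hb : (0:ℝ) < ‖v‖ := norm_pos_iff.mpr hv
        set a := ‖u‖ with ha'
        set b := ‖v‖ with hb'
        set t : ℝ := ∑ i, u i * v i with ht
        have hexp : ∑ i, ∑ j,
            ((a⁻¹ • Matrix.of (fun i j => u i * u j)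
              - b⁻¹ • Matrix.of (fun i j => v i * v j)) i j) ^ 2
            = a⁻¹ ^ 2 * (∑ i, ∑ j, (u i * u j) * (u i * u j))
              - 2 * (a⁻¹ * b⁻¹) * (∑ i, ∑ j, (u i * u j) * (v i * v j))
              + b⁻¹ ^ 2 * (∑ i, ∑ j, (v i * v j) * (v i * v j)) := by
          simp only [Matrix.sub_apply, Matrix.smul_apply, Matrix.of_apply, smul_eq_mul,
            Finset.mul_sum, ← Finset.sum_add_distrib, ← Finset.sum_sub_distrib]
          exact Finset.sum_congr rfl fun i _ => Finset.sum_congr rfl fun j _ => by ring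
        rw [hexp, sum_sum_mul_mul, sum_sum_mul_mul, sum_sum_mul_mul, euclid_sum_sq, euclid_sum_sq,
          ← ht]
        have hnorm : ‖u - v‖ ^ 2 = a ^ 2 - 2 * t + b ^ 2 := by
          rw [norm_sub_sq_real, euclid_inner_eq, ← ht, ← ha', ← hb']
        have h1 : a⁻¹ ^ 2 * (a ^ 2) ^ 2 = a ^ 2 := by field_simp
        have h2 : b⁻¹ ^ 2 * (b ^ 2) ^ 2 = b ^ 2 := by field_simp
        rw [h1, h2]
        -- key inequality: 4*t - (a^2 + b^2) ≤ 2 * (a⁻¹*b⁻¹) * t^2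
        have hab : (0:ℝ) < a * b := mul_pos ha hb
        have hkey : 4 * t - (a ^ 2 + b ^ 2) ≤ 2 * (a⁻¹ * b⁻¹) * t ^ 2 := by
          rw [← mul_le_mul_iff_right₀ hab]
          have hq : a * b * (2 * (a⁻¹ * b⁻¹) * t ^ 2) = 2 * t ^ 2 := by
            field_simp
          rw [hq]
          nlinarith [sq_nonneg (t - a * b), mul_nonneg hab.le (sq_nonneg (a - b))]
        have h4 : (2 * ‖u - v‖) ^ 2 = 4 * (a ^ 2 - 2 * t + b ^ 2) := by
          rw [mul_pow, hnorm]; ring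
        rw [h4]
        have hnn : (0:ℝ) ≤ a ^ 2 - 2 * t + b ^ 2 := by
          rw [← hnorm]; positivity
        nlinarith [hkey, hnn]
end
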